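/- arXiv:2303.05468 — 4 statements merged into one kernel-verified Lean document; each statement's English description precedes it below -/
import Mathlib

section
/- Let n ≥ 4. In the quasi-abelian group QA_n, both tuples T = (yx; y, y, x^{2^{n-2}-2}) and T' = (x; y, x^{2^{n-2}}, y x^{2^{n-2}-2}) satisfy all of the following: the first entry lies in QA_n \ H_1; the remaining three entries lie in H_1 and have orders 2, 2 and 2^{n-2} respectively; writing the tuple as (d; β_1, β_2, β_3), the relation β_1 β_2 β_3 d^2 = 1 holds; and the four entries generate QA_n. Nevertheless, for every automorphism φ of QA_n, the multiset of conjugacy classes of (φ(y), φ(y), φ(x^{2^{n-2}-2})) is different from the multiset of conjugacy classes of (y, x^{2^{n-2}}, y x^{2^{n-2}-2}); in particular the two tuples are not equivalent under Aut(QA_n) combined with conjugation and permutation of the last three entries. -/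
/-- The relators of the quasi-abelian group `QA_n`:
`x^(2^(n-1)) = 1`, `y^2 = 1`, `y * x * y⁻¹ = x^(2^(n-2)+1)`.
The generator `x` is encoded by `true` and `y` by `false`. -/
def qaRels (n : ℕ) : Set (FreeGroup Bool) :=
  {FreeGroup.of true ^ 2 ^ (n - 1),
   FreeGroup.of false ^ 2,
   FreeGroup.of false * FreeGroup.of true * (FreeGroup.of false)⁻¹ *
     (FreeGroup.of true ^ (2 ^ (n - 2) + 1))⁻¹}

/-- The quasi-abelian group `QA_n`, given by the presentation
`⟨x, y ∣ x^(2^(n-1)) = y^2 = 1, y x y⁻¹ = x^(2^(n-2)+1)⟩`. -/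
abbrev QA (n : ℕ) : Type := PresentedGroup (qaRels n)

/-- The generator `x` of `QA_n`. -/
def qx (n : ℕ) : QA n := PresentedGroup.of true

/-- The generator `y` of `QA_n`. -/
def qy (n : ℕ) : QA n := PresentedGroup.of false

/-- The index-two subgroup `H₁ = ⟨x², y⟩` of `QA_n`. -/
def H1 (n : ℕ) : Subgroup (QA n) := Subgroup.closure {qx n ^ 2, qy n}

namespace QAaux

/-! ### Arithmetic helpers -/

lemma e2' (m : ℕ) : (2:ℕ)^(m+2) = 2*2^(m+1) := by rw [pow_succ]; ring
lemma e3' (m : ℕ) : (2:ℕ)^(m+3) = 4*2^(m+1) := by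
  rw [show m+3 = (m+1)+2 from by omega, pow_add]; ring
lemma e3'' (m : ℕ) : (2:ℕ)^(m+3) = 2*2^(m+2) := by rw [pow_succ]; ring
lemma ek (m : ℕ) : (2:ℕ)^(m+2) - 2 = 2*(2^(m+1)-1) := by
  have := e2' m; omega
lemma h4le (m : ℕ) : 4 ≤ (2:ℕ)^(m+2) := by
  calc (4:ℕ) = 2^2 := rfl
  _ ≤ 2^(m+2) := Nat.pow_le_pow_right (by norm_num) (by omega)

abbrev Mod (m : ℕ) := ZMod (2^(m+3))

instance (m : ℕ) : NeZero ((2:ℕ)^(m+3)) := ⟨by positivity⟩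

lemma two_pow_m3 (m : ℕ) : ((2^(m+3) : ℕ) : Mod m) = 0 := ZMod.natCast_self _

lemma r_sq_nat (m : ℕ) : ((2^(m+2)+1) * (2^(m+2)+1) : ℕ) = 2^(m+3)*(2^(m+1)+1) + 1 := by
  rw [e2' m, e3' m]; ring

lemma r_sq (m : ℕ) : ((2^(m+2)+1 : ℕ) : Mod m) * ((2^(m+2)+1 : ℕ) : Mod m) = 1 := by
  rw [← Nat.cast_mul, r_sq_nat, Nat.cast_add, Nat.cast_mul, two_pow_m3, zero_mul, zero_add,
    Nat.cast_one]

/-! ### The permutation model -/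

def sigma (m : ℕ) : Equiv.Perm (Mod m) where
  toFun a := ((2^(m+2)+1 : ℕ) : Mod m) * a
  invFun a := ((2^(m+2)+1 : ℕ) : Mod m) * a
  left_inv a := by
    show ((2^(m+2)+1 : ℕ) : Mod m) * (((2^(m+2)+1 : ℕ) : Mod m) * a) = a
    rw [← mul_assoc, r_sq, one_mul]
  right_inv a := by
    show ((2^(m+2)+1 : ℕ) : Mod m) * (((2^(m+2)+1 : ℕ) : Mod m) * a) = a
    rw [← mul_assoc, r_sq, one_mul]

lemma sigma_apply (m : ℕ) (a : Mod m) : sigma m a = ((2^(m+2)+1 : ℕ) : Mod m) * a := rfl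
lemma sigma_inv_apply (m : ℕ) (a : Mod m) :
    (sigma m)⁻¹ a = ((2^(m+2)+1 : ℕ) : Mod m) * a := rfl

def tau (m : ℕ) : Equiv.Perm (Mod m) := Equiv.addRight 1

lemma tau_apply (m : ℕ) (a : Mod m) : tau m a = a + 1 := rfl

lemma tau_pow (m j : ℕ) (a : Mod m) : (tau m ^ j) a = a + (j : Mod m) := by
  induction j with
  | zero => simp
  | succ j ih =>
    rw [pow_succ', Equiv.Perm.mul_apply, tau_apply, ih]
    push_cast; ring

def fgen (m : ℕ) : Bool → Equiv.Perm (Mod m) := fun b => match b with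
  | true => tau m
  | false => sigma m

lemma psi_cond (m : ℕ) : ∀ rel ∈ qaRels (m+4), FreeGroup.lift (fgen m) rel = 1 := by
  intro rel h
  simp only [qaRels, show m+4-1 = m+3 from by omega, show m+4-2 = m+2 from by omega,
    Set.mem_insert_iff, Set.mem_singleton_iff] at h
  rcases h with rfl | rfl | rfl
  · rw [map_pow, FreeGroup.lift_apply_of]
    show tau m ^ 2^(m+3) = 1
    ext a
    rw [tau_pow, two_pow_m3, add_zero]; rfl
  · rw [map_pow, FreeGroup.lift_apply_of]
    show sigma m ^ 2 = 1
    ext a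
    rw [pow_two, Equiv.Perm.mul_apply, sigma_apply, sigma_apply, ← mul_assoc, r_sq, one_mul]
    rfl
  · simp only [map_mul, map_inv, map_pow, FreeGroup.lift_apply_of]
    show sigma m * tau m * (sigma m)⁻¹ * (tau m ^ (2^(m+2)+1))⁻¹ = 1
    rw [mul_inv_eq_one]
    ext a
    rw [Equiv.Perm.mul_apply, Equiv.Perm.mul_apply, sigma_inv_apply, tau_apply, sigma_apply,
      tau_pow, mul_add, ← mul_assoc, r_sq, one_mul, mul_one]

def psi (m : ℕ) : QA (m+4) →* Equiv.Perm (Mod m) :=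
  PresentedGroup.toGroup (psi_cond m)

lemma psi_x (m : ℕ) : psi m (qx (m+4)) = tau m := PresentedGroup.toGroup.of _
lemma psi_y (m : ℕ) : psi m (qy (m+4)) = sigma m := PresentedGroup.toGroup.of _

/-! ### Homs to `Multiplicative (ZMod 2)` -/

lemma z2_sq : ∀ x : Multiplicative (ZMod 2), x^2 = 1 := by decide

lemma z2_pow_even (x : Multiplicative (ZMod 2)) {e : ℕ} (h : 2 ∣ e) : x^e = 1 := by
  obtain ⟨t, rfl⟩ := h
  rw [pow_mul, z2_sq, one_pow]

lemma z2_pow_odd (x : Multiplicative (ZMod 2)) {e : ℕ} (h : e % 2 = 1) : x^e = x := by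
  obtain ⟨t, rfl⟩ : ∃ t, e = 2*t + 1 := ⟨e/2, by omega⟩
  rw [pow_succ, pow_mul, z2_sq, one_pow, one_mul]

/-- `x ↦ 1`, `y ↦ ofAdd 1`. -/
def ggen : Bool → Multiplicative (ZMod 2) := fun b => match b with
  | true => 1
  | false => Multiplicative.ofAdd 1

lemma g_cond (m : ℕ) : ∀ rel ∈ qaRels (m+4), FreeGroup.lift ggen rel = 1 := by
  intro rel h
  simp only [qaRels, Set.mem_insert_iff, Set.mem_singleton_iff] at h
  rcases h with rfl | rfl | rfl
  · rw [map_pow, FreeGroup.lift_apply_of]; show (1 : Multiplicative (ZMod 2))^_ = 1; rw [one_pow]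
  · rw [map_pow, FreeGroup.lift_apply_of]; exact z2_sq _
  · simp only [map_mul, map_inv, map_pow, FreeGroup.lift_apply_of]
    show Multiplicative.ofAdd 1 * 1 * (Multiplicative.ofAdd 1)⁻¹ * ((1:Multiplicative (ZMod 2))^_)⁻¹ = 1
    rw [one_pow, inv_one, mul_one, mul_one, mul_inv_cancel]

def gmap (m : ℕ) : QA (m+4) →* Multiplicative (ZMod 2) :=
  PresentedGroup.toGroup (g_cond m)

lemma g_x (m : ℕ) : gmap m (qx (m+4)) = 1 := PresentedGroup.toGroup.of _
lemma g_y (m : ℕ) : gmap m (qy (m+4)) = Multiplicative.ofAdd 1 := PresentedGroup.toGroup.of _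

/-- `x ↦ ofAdd 1`, `y ↦ 1`. -/
def fgen2 : Bool → Multiplicative (ZMod 2) := fun b => match b with
  | true => Multiplicative.ofAdd 1
  | false => 1

lemma f_cond (m : ℕ) : ∀ rel ∈ qaRels (m+4), FreeGroup.lift fgen2 rel = 1 := by
  intro rel h
  simp only [qaRels, show m+4-1 = m+3 from by omega, show m+4-2 = m+2 from by omega,
    Set.mem_insert_iff, Set.mem_singleton_iff] at h
  rcases h with rfl | rfl | rfl
  · rw [map_pow, FreeGroup.lift_apply_of]
    exact z2_pow_even _ ⟨2^(m+2), e3'' m⟩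
  · rw [map_pow, FreeGroup.lift_apply_of]; show (1 : Multiplicative (ZMod 2))^2 = 1; rw [one_pow]
  · simp only [map_mul, map_inv, map_pow, FreeGroup.lift_apply_of]
    show (1:Multiplicative (ZMod 2)) * Multiplicative.ofAdd 1 * (1:Multiplicative (ZMod 2))⁻¹ *
      ((Multiplicative.ofAdd 1)^(2^(m+2)+1))⁻¹ = 1
    rw [z2_pow_odd _ (by rw [e2' m]; omega), inv_one, one_mul, mul_one, mul_inv_cancel]

def fmap (m : ℕ) : QA (m+4) →* Multiplicative (ZMod 2) :=
  PresentedGroup.toGroup (f_cond m)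

lemma f_x (m : ℕ) : fmap m (qx (m+4)) = Multiplicative.ofAdd 1 := PresentedGroup.toGroup.of _
lemma f_y (m : ℕ) : fmap m (qy (m+4)) = 1 := PresentedGroup.toGroup.of _

/-! ### Relations in `QA` -/

lemma rel_one (m : ℕ) : ∀ rel ∈ qaRels (m+4), PresentedGroup.mk (qaRels (m+4)) rel = 1 :=
  fun _ h => (QuotientGroup.eq_one_iff _).mpr (Subgroup.subset_normalClosure h)

lemma hX (m : ℕ) : qx (m+4) ^ (2^(m+3)) = 1 := by
  have h := rel_one m _ (Set.mem_insert _ _)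
  rw [map_pow] at h
  rw [show m+4-1 = m+3 from by omega] at h
  exact h

lemma hY2 (m : ℕ) : qy (m+4) ^ 2 = 1 := by
  have h := rel_one m _ (Set.mem_insert_of_mem _ (Set.mem_insert _ _))
  rw [map_pow] at h
  exact h

lemma hYinv (m : ℕ) : (qy (m+4))⁻¹ = qy (m+4) :=
  inv_eq_of_mul_eq_one_right (by rw [← pow_two]; exact hY2 m)

lemma hconj (m : ℕ) : qy (m+4) * qx (m+4) * (qy (m+4))⁻¹ = qx (m+4) ^ (2^(m+2)+1) := by
  have h := rel_one m _ (Set.mem_insert_of_mem _ (Set.mem_insert_of_mem _ rfl))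
  simp only [map_mul, map_inv, map_pow] at h
  rw [mul_inv_eq_one] at h
  rw [show m+4-2 = m+2 from by omega] at h
  exact h

lemma hconjpow (m j : ℕ) :
    qy (m+4) * qx (m+4)^j * (qy (m+4))⁻¹ = qx (m+4) ^ ((2^(m+2)+1)*j) := by
  rw [← conj_pow, hconj, ← pow_mul]

lemma hXe (m : ℕ) {e : ℕ} (h : 2^(m+3) ∣ e) : qx (m+4) ^ e = 1 := by
  obtain ⟨t, rfl⟩ := h
  rw [pow_mul, hX, one_pow]

lemma cast_eq_zero_of_pow_eq_one (m : ℕ) {j : ℕ} (h : qx (m+4) ^ j = 1) :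
    ((j : ℕ) : Mod m) = 0 := by
  have h0 := congrArg (fun g => (psi m g) (0 : Mod m)) h
  simp only [map_pow, psi_x, map_one] at h0
  rw [tau_pow] at h0
  simpa using h0

lemma hXdvd (m : ℕ) {j : ℕ} (h : qx (m+4) ^ j = 1) : 2^(m+3) ∣ j := by
  have := cast_eq_zero_of_pow_eq_one m h
  rwa [ZMod.natCast_eq_zero_iff] at this

lemma hXpow_ne (m s : ℕ) (hs : 1 ≤ s) : qx (m+4) ^ (2^(m+2) * (2^s - 1)) ≠ 1 := by
  intro h
  have h0 := hXdvd m h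
  rw [pow_succ', mul_comm (2:ℕ) (2^(m+2))] at h0
  have h2 : (2:ℕ) ∣ 2^s - 1 :=
    (mul_dvd_mul_iff_left (pow_ne_zero (m+2) (two_ne_zero))).mp h0
  have h3 : (2:ℕ) ∣ 2^s := dvd_pow_self 2 (by omega)
  have h4 : 2^1 ≤ (2:ℕ)^s := Nat.pow_le_pow_right (by norm_num) hs
  omega

/-! ### H1 membership -/

lemma H1_le_ker (m : ℕ) : H1 (m+4) ≤ (fmap m).ker := by
  rw [H1, Subgroup.closure_le]
  rintro z (rfl | rfl)
  · show fmap m (qx (m+4) ^ 2) = 1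
    rw [map_pow, f_x]; exact z2_sq _
  · show fmap m (qy (m+4)) = 1
    exact f_y m

lemma yx_not_mem (m : ℕ) : qy (m+4) * qx (m+4) ∉ H1 (m+4) := by
  intro h
  have h1 : fmap m (qy (m+4) * qx (m+4)) = 1 := H1_le_ker m h
  rw [map_mul, f_x, f_y, one_mul] at h1
  exact absurd h1 (by decide)

lemma x_not_mem (m : ℕ) : qx (m+4) ∉ H1 (m+4) := by
  intro h
  have h1 : fmap m (qx (m+4)) = 1 := H1_le_ker m h
  rw [f_x] at h1
  exact absurd h1 (by decide)

lemma y_mem (m : ℕ) : qy (m+4) ∈ H1 (m+4) :=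
  Subgroup.subset_closure (Set.mem_insert_of_mem _ rfl)

lemma x_sq_mem (m : ℕ) : qx (m+4) ^ 2 ∈ H1 (m+4) :=
  Subgroup.subset_closure (Set.mem_insert _ _)

lemma x_even_mem (m : ℕ) {e : ℕ} (h : 2 ∣ e) : qx (m+4) ^ e ∈ H1 (m+4) := by
  obtain ⟨t, rfl⟩ := h
  rw [pow_mul]
  exact pow_mem (x_sq_mem m) t

lemma xk_mem (m : ℕ) : qx (m+4) ^ (2^(m+2) - 2) ∈ H1 (m+4) :=
  x_even_mem m ⟨2^(m+1)-1, ek m⟩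

lemma x2m2_mem (m : ℕ) : qx (m+4) ^ (2^(m+2)) ∈ H1 (m+4) :=
  x_even_mem m ⟨2^(m+1), e2' m⟩

lemma yxk_mem (m : ℕ) : qy (m+4) * qx (m+4) ^ (2^(m+2) - 2) ∈ H1 (m+4) :=
  mul_mem (y_mem m) (xk_mem m)

/-! ### Orders -/

lemma y_ne_one (m : ℕ) : qy (m+4) ≠ 1 := by
  intro h
  have h1 : gmap m (qy (m+4)) = 1 := by rw [h, map_one]
  rw [g_y] at h1
  exact absurd h1 (by decide)

lemma order_y (m : ℕ) : orderOf (qy (m+4)) = 2 :=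
  orderOf_eq_prime (hY2 m) (y_ne_one m)

lemma order_xk (m : ℕ) : orderOf (qx (m+4) ^ (2^(m+2) - 2)) = 2^(m+2) := by
  have hnot : (qx (m+4) ^ (2^(m+2) - 2)) ^ (2^(m+1)) ≠ 1 := by
    rw [← pow_mul]
    rw [show (2^(m+2)-2) * 2^(m+1) = 2^(m+2)*(2^(m+1)-1) from by rw [ek m, pow_succ]; ring]
    exact hXpow_ne m (m+1) (by omega)
  have hfin : (qx (m+4) ^ (2^(m+2) - 2)) ^ (2^(m+2)) = 1 := by
    rw [← pow_mul]
    exact hXe m ⟨2^(m+1)-1, by rw [ek m, e3'', pow_succ]; ring⟩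
  have := orderOf_eq_prime_pow (p := 2) (n := m+1) hnot (by
    rw [show (m+1)+1 = m+2 from rfl]; exact hfin)
  rwa [show (m+1)+1 = m+2 from rfl] at this

lemma x2m2_ne_one (m : ℕ) : qx (m+4) ^ (2^(m+2)) ≠ 1 := by
  have := hXpow_ne m 1 le_rfl
  simpa using this

lemma order_x2m2 (m : ℕ) : orderOf (qx (m+4) ^ (2^(m+2))) = 2 := by
  refine orderOf_eq_prime ?_ (x2m2_ne_one m)
  rw [← pow_mul]
  exact hXe m ⟨1, by rw [e3'']; ring⟩

lemma yxk_sq (m : ℕ) :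
    (qy (m+4) * qx (m+4) ^ (2^(m+2)-2)) ^ 2
      = qx (m+4) ^ ((2^(m+2)+1)*(2^(m+2)-2) + (2^(m+2)-2)) := by
  have hsq : (qy (m+4) * qx (m+4) ^ (2^(m+2)-2)) ^ 2
      = (qy (m+4) * qx (m+4) ^ (2^(m+2)-2) * (qy (m+4))⁻¹) * qx (m+4) ^ (2^(m+2)-2) := by
    rw [pow_two, hYinv]
    group
  rw [hsq, hconjpow, ← pow_add]

lemma order_yxk (m : ℕ) :
    orderOf (qy (m+4) * qx (m+4) ^ (2^(m+2) - 2)) = 2^(m+2) := by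
  have hnot : (qy (m+4) * qx (m+4) ^ (2^(m+2)-2)) ^ (2^(m+1)) ≠ 1 := by
    have h1 : 1 ≤ (2:ℕ)^m := Nat.one_le_two_pow
    have c1 : (2:ℕ)^(m+2) = 2^m*4 := by rw [pow_add]; norm_num
    have eid : ((2^(m+2)+1)*(2^(m+2)-2) + (2^(m+2)-2)) * 2^m = 2^(m+2)*(2^(2*m+2)-1) := by
      have h2 : 1 ≤ (2:ℕ)^(2*m+2) := Nat.one_le_two_pow
      zify [show (2:ℕ) ≤ 2^(m+2) from by omega, h2]
      have c1' : (2:ℤ)^(m+2) = 2^m*4 := by rw [pow_add]; norm_num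
      have c2' : (2:ℤ)^(2*m+2) = 2^m*(2^m*4) := by
        rw [show 2*m+2 = m+(m+2) from by omega, pow_add, c1']
      rw [c1', c2']; ring
    rw [show (2:ℕ)^(m+1) = 2*2^m from pow_succ' 2 m, pow_mul, yxk_sq, ← pow_mul, eid]
    exact hXpow_ne m (2*m+2) (by omega)
  have hfin : (qy (m+4) * qx (m+4) ^ (2^(m+2)-2)) ^ (2^(m+2)) = 1 := by
    have hsplit : (qy (m+4) * qx (m+4) ^ (2^(m+2)-2)) ^ (2^(m+2))
        = ((qy (m+4) * qx (m+4) ^ (2^(m+2)-2)) ^ 2) ^ (2^(m+1)) := by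
      rw [← pow_mul, ← e2' m]
    rw [hsplit, yxk_sq, ← pow_mul]
    refine hXe m ⟨(2^(m+1)+1)*(2^(m+1)-1), ?_⟩
    rw [ek m, e2' m, e3' m]; ring
  have := orderOf_eq_prime_pow (p := 2) (n := m+1) hnot (by
    rw [show (m+1)+1 = m+2 from rfl]; exact hfin)
  rwa [show (m+1)+1 = m+2 from rfl] at this

/-! ### The two product relations -/

lemma relT (m : ℕ) :
    qy (m+4) * qy (m+4) * qx (m+4) ^ (2^(m+2) - 2) * (qy (m+4) * qx (m+4)) ^ 2 = 1 := by
  have hYY : qy (m+4) * qy (m+4) = 1 := by rw [← pow_two]; exact hY2 m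
  have hYX2 : (qy (m+4) * qx (m+4)) ^ 2 = qx (m+4) ^ (2^(m+2)+1+1) := by
    have : (qy (m+4) * qx (m+4)) ^ 2
        = (qy (m+4) * qx (m+4) * (qy (m+4))⁻¹) * qx (m+4) := by
      rw [pow_two, hYinv]; group
    rw [this, hconj, ← pow_succ]
  rw [hYY, one_mul, hYX2, ← pow_add]
  refine hXe m ⟨1, ?_⟩
  have h0 : 1 ≤ (2:ℕ)^m := Nat.one_le_two_pow
  have h1 : (2:ℕ)^(m+2) = 4*2^m := by rw [pow_add]; ring
  have h2 : (2:ℕ)^(m+3) = 8*2^m := by rw [pow_add]; ring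
  omega

lemma relT' (m : ℕ) :
    qy (m+4) * qx (m+4) ^ 2^(m+2) * (qy (m+4) * qx (m+4) ^ (2^(m+2) - 2)) * qx (m+4) ^ 2
      = 1 := by
  have h : qy (m+4) * qx (m+4) ^ 2^(m+2) * (qy (m+4) * qx (m+4) ^ (2^(m+2) - 2)) * qx (m+4) ^ 2
      = (qy (m+4) * qx (m+4) ^ 2^(m+2) * (qy (m+4))⁻¹) * qx (m+4) ^ (2^(m+2) - 2)
        * qx (m+4) ^ 2 := by
    rw [hYinv]; group
  rw [h, hconjpow, ← pow_add, ← pow_add]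
  refine hXe m ⟨2^(m+1)+1, ?_⟩
  have h1 : 1 ≤ (2:ℕ)^(m+1) := Nat.one_le_two_pow
  zify [show (2:ℕ) ≤ 2^(m+2) from by have := e2' m; omega]
  have c1' : (2:ℤ)^(m+2) = 2^(m+1)*2 := by rw [pow_succ]
  have c3' : (2:ℤ)^(m+3) = 2^(m+1)*4 := by
    rw [show m+3 = (m+1)+2 from by omega, pow_add]; norm_num
  rw [c1', c3']; ring

/-! ### Generation -/

lemma closure_top (m : ℕ) {S : Set (QA (m+4))}
    (hx : qx (m+4) ∈ Subgroup.closure S) (hy : qy (m+4) ∈ Subgroup.closure S) :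
    Subgroup.closure S = ⊤ := by
  rw [eq_top_iff, ← PresentedGroup.closure_range_of (qaRels (m+4))]
  refine (Subgroup.closure_le _).mpr ?_
  rintro _ ⟨b, rfl⟩
  cases b
  · exact hy
  · exact hx

lemma genT (m : ℕ) :
    Subgroup.closure {qy (m+4) * qx (m+4), qy (m+4), qx (m+4) ^ (2^(m+2) - 2)}
      = (⊤ : Subgroup (QA (m+4))) := by
  have hyx : qy (m+4) * qx (m+4)
      ∈ Subgroup.closure {qy (m+4) * qx (m+4), qy (m+4), qx (m+4) ^ (2^(m+2) - 2)} :=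
    Subgroup.subset_closure (Set.mem_insert _ _)
  have hy : qy (m+4)
      ∈ Subgroup.closure {qy (m+4) * qx (m+4), qy (m+4), qx (m+4) ^ (2^(m+2) - 2)} :=
    Subgroup.subset_closure (Set.mem_insert_of_mem _ (Set.mem_insert _ _))
  refine closure_top m ?_ hy
  have := mul_mem (inv_mem hy) hyx
  rwa [inv_mul_cancel_left] at this

lemma genT' (m : ℕ) :
    Subgroup.closure {qx (m+4), qy (m+4), qx (m+4) ^ 2^(m+2),
        qy (m+4) * qx (m+4) ^ (2^(m+2) - 2)} = (⊤ : Subgroup (QA (m+4))) := by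
  refine closure_top m (Subgroup.subset_closure (Set.mem_insert _ _))
    (Subgroup.subset_closure (Set.mem_insert_of_mem _ (Set.mem_insert _ _)))

/-! ### Non-conjugacy -/

lemma not_conj_y_x2m2 (m : ℕ) :
    ConjClasses.mk (qy (m+4)) ≠ ConjClasses.mk (qx (m+4) ^ 2^(m+2)) := by
  intro h
  have h2 := (gmap m).map_isConj (ConjClasses.mk_eq_mk_iff_isConj.mp h)
  rw [isConj_iff_eq, g_y, map_pow, g_x, one_pow] at h2
  exact absurd h2 (by decide)

lemma not_conj_x2m2_yxk (m : ℕ) :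
    ConjClasses.mk (qx (m+4) ^ 2^(m+2))
      ≠ ConjClasses.mk (qy (m+4) * qx (m+4) ^ (2^(m+2) - 2)) := by
  intro h
  have h2 := (gmap m).map_isConj (ConjClasses.mk_eq_mk_iff_isConj.mp h)
  rw [isConj_iff_eq, map_pow, g_x, one_pow, map_mul, g_y, map_pow, g_x, one_pow, mul_one] at h2
  exact absurd h2 (by decide)

lemma not_conj_y_yxk (m : ℕ) :
    ConjClasses.mk (qy (m+4))
      ≠ ConjClasses.mk (qy (m+4) * qx (m+4) ^ (2^(m+2) - 2)) := by
  intro h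
  rw [ConjClasses.mk_eq_mk_iff_isConj] at h
  obtain ⟨u, hu⟩ := isConj_iff.mp ((psi m).map_isConj h)
  rw [map_mul, map_pow, psi_x, psi_y] at hu
  have happ := congrArg (fun p : Equiv.Perm (Mod m) => p (u (0 : Mod m))) hu
  simp only [Equiv.Perm.mul_apply, Equiv.Perm.inv_def, Equiv.symm_apply_apply] at happ
  rw [sigma_apply, mul_zero, tau_pow, sigma_apply] at happ
  -- happ : u 0 = r * (u 0 + k)
  set a : Mod m := u 0 with ha
  set K : Mod m := ((2^(m+2)-2 : ℕ) : Mod m) with hK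
  set R : Mod m := ((2^(m+2) : ℕ) : Mod m) with hR
  have hcast : ((2^(m+2)+1 : ℕ) : Mod m) = R + 1 := by rw [hR]; push_cast; ring
  rw [hcast] at happ
  have hzk : R * K = 0 := by
    rw [hR, hK, ← Nat.cast_mul,
      show (2^(m+2) * (2^(m+2)-2) : ℕ) = 2^(m+3)*(2^(m+1)-1) from by
        rw [ek m, e3'', pow_succ]; ring,
      Nat.cast_mul, two_pow_m3, zero_mul]
  have h0 : R * a + K = 0 := by linear_combination -happ - hzk
  have hR2 : (2 : Mod m) * R = 0 := by
    rw [hR, show ((2:Mod m)) = ((2:ℕ) : Mod m) from by push_cast; ring, ← Nat.cast_mul,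
      ← pow_succ', two_pow_m3]
  have h2 : ((2*(2^(m+2)-2) : ℕ) : Mod m) = 0 := by
    rw [Nat.cast_mul, Nat.cast_ofNat, ← hK]
    linear_combination 2*h0 - a*hR2
  rw [ZMod.natCast_eq_zero_iff] at h2
  have h4 := h4le m
  have h5 := e3'' m
  have h6 := Nat.le_of_dvd (by omega) h2
  omega

end QAaux

/-- For `n ≥ 4`, both tuples `T = (yx; y, y, x^(2^(n-2)-2))` and
`T' = (x; y, x^(2^(n-2)), y x^(2^(n-2)-2))` of elements of `QA_n` satisfy: the first
entry lies outside `H₁`; the remaining three lie in `H₁` and have orders `2`, `2`,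
`2^(n-2)`; writing the tuple as `(d; β₁, β₂, β₃)` the relation `β₁ β₂ β₃ d² = 1` holds;
and the four entries generate `QA_n`. Nevertheless, for every automorphism `φ` of
`QA_n`, the multiset of conjugacy classes of `(φ y, φ y, φ (x^(2^(n-2)-2)))` differs
from the multiset of conjugacy classes of `(y, x^(2^(n-2)), y x^(2^(n-2)-2))`. -/
theorem stmt15 (n : ℕ) (hn : 4 ≤ n) :
    (qy n * qx n ∉ H1 n ∧
      (qy n ∈ H1 n ∧ qx n ^ (2 ^ (n - 2) - 2) ∈ H1 n) ∧
      orderOf (qy n) = 2 ∧ orderOf (qx n ^ (2 ^ (n - 2) - 2)) = 2 ^ (n - 2) ∧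
      qy n * qy n * qx n ^ (2 ^ (n - 2) - 2) * (qy n * qx n) ^ 2 = 1 ∧
      Subgroup.closure {qy n * qx n, qy n, qx n ^ (2 ^ (n - 2) - 2)} =
        (⊤ : Subgroup (QA n))) ∧
    (qx n ∉ H1 n ∧
      (qy n ∈ H1 n ∧ qx n ^ 2 ^ (n - 2) ∈ H1 n ∧
        qy n * qx n ^ (2 ^ (n - 2) - 2) ∈ H1 n) ∧
      orderOf (qy n) = 2 ∧ orderOf (qx n ^ 2 ^ (n - 2)) = 2 ∧
      orderOf (qy n * qx n ^ (2 ^ (n - 2) - 2)) = 2 ^ (n - 2) ∧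
      qy n * qx n ^ 2 ^ (n - 2) * (qy n * qx n ^ (2 ^ (n - 2) - 2)) * (qx n) ^ 2 = 1 ∧
      Subgroup.closure {qx n, qy n, qx n ^ 2 ^ (n - 2),
        qy n * qx n ^ (2 ^ (n - 2) - 2)} = (⊤ : Subgroup (QA n))) ∧
    (∀ φ : MulAut (QA n),
      ({ConjClasses.mk (φ (qy n)), ConjClasses.mk (φ (qy n)),
          ConjClasses.mk (φ (qx n ^ (2 ^ (n - 2) - 2)))} : Multiset (ConjClasses (QA n))) ≠
        {ConjClasses.mk (qy n), ConjClasses.mk (qx n ^ 2 ^ (n - 2)),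
          ConjClasses.mk (qy n * qx n ^ (2 ^ (n - 2) - 2))}) := by
  obtain ⟨m, rfl⟩ : ∃ m, n = m + 4 := ⟨n - 4, by omega⟩
  simp only [show m + 4 - 2 = m + 2 from by omega]
  refine ⟨⟨QAaux.yx_not_mem m, ⟨QAaux.y_mem m, QAaux.xk_mem m⟩, QAaux.order_y m,
    QAaux.order_xk m, QAaux.relT m, QAaux.genT m⟩,
    ⟨QAaux.x_not_mem m, ⟨QAaux.y_mem m, QAaux.x2m2_mem m, QAaux.yxk_mem m⟩,
      QAaux.order_y m, QAaux.order_x2m2 m, QAaux.order_yxk m, QAaux.relT' m, QAaux.genT' m⟩,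
    ?_⟩
  intro φ h
  have hcd := QAaux.not_conj_y_x2m2 m
  have hce := QAaux.not_conj_y_yxk m
  have hde := QAaux.not_conj_x2m2_yxk m
  have hc : ConjClasses.mk (qy (m+4)) = ConjClasses.mk (φ (qy (m+4)))
      ∨ ConjClasses.mk (qy (m+4)) = ConjClasses.mk (φ (qx (m+4) ^ (2^(m+2)-2))) := by
    have hm : ConjClasses.mk (qy (m+4)) ∈ ({ConjClasses.mk (φ (qy (m+4))),
        ConjClasses.mk (φ (qy (m+4))), ConjClasses.mk (φ (qx (m+4) ^ (2^(m+2)-2)))} :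
          Multiset (ConjClasses (QA (m+4)))) := by
      rw [h]; simp
    simpa using hm
  have hd : ConjClasses.mk (qx (m+4) ^ 2^(m+2)) = ConjClasses.mk (φ (qy (m+4)))
      ∨ ConjClasses.mk (qx (m+4) ^ 2^(m+2))
        = ConjClasses.mk (φ (qx (m+4) ^ (2^(m+2)-2))) := by
    have hm : ConjClasses.mk (qx (m+4) ^ 2^(m+2)) ∈ ({ConjClasses.mk (φ (qy (m+4))),
        ConjClasses.mk (φ (qy (m+4))), ConjClasses.mk (φ (qx (m+4) ^ (2^(m+2)-2)))} :
          Multiset (ConjClasses (QA (m+4)))) := by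
      rw [h]; simp
    simpa using hm
  have he : ConjClasses.mk (qy (m+4) * qx (m+4) ^ (2^(m+2)-2)) = ConjClasses.mk (φ (qy (m+4)))
      ∨ ConjClasses.mk (qy (m+4) * qx (m+4) ^ (2^(m+2)-2))
        = ConjClasses.mk (φ (qx (m+4) ^ (2^(m+2)-2))) := by
    have hm : ConjClasses.mk (qy (m+4) * qx (m+4) ^ (2^(m+2)-2)) ∈
        ({ConjClasses.mk (φ (qy (m+4))), ConjClasses.mk (φ (qy (m+4))),
          ConjClasses.mk (φ (qx (m+4) ^ (2^(m+2)-2)))} :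
          Multiset (ConjClasses (QA (m+4)))) := by
      rw [h]; simp
    simpa using hm
  rcases hc with hc | hc <;> rcases hd with hd | hd <;> rcases he with he | he <;>
    first
      | exact hcd (hc.trans hd.symm)
      | exact hce (hc.trans he.symm)
      | exact hde (hd.trans he.symm)
end

section
/- For every integer n ≥ 4, the group K_n = ⟨a, b ∣ a^8 = 1, b^{2^{n-2}} = a^4, b a b^{-1} = a^α⟩ (with α = −1 for n even and α = 3 for n odd) has order exactly 2^{n+1}; moreover the element a has order 8 and the element b has order 2^{n-1}. -/
/-- The exponent `α` in the presentation of `K_n`: `α = -1` for `n` even, `α = 3` for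
`n` odd. -/
def kAlpha (n : ℕ) : ℤ := if Even n then -1 else 3

/-- The relators of the group `K_n`:
`a^8 = 1`, `b^(2^(n-2)) = a^4`, `b * a * b⁻¹ = a^α`.
The generator `a` is encoded by `true` and `b` by `false`. -/
def kRels (n : ℕ) : Set (FreeGroup Bool) :=
  {FreeGroup.of true ^ 8,
   FreeGroup.of false ^ 2 ^ (n - 2) * (FreeGroup.of true ^ 4)⁻¹,
   FreeGroup.of false * FreeGroup.of true * (FreeGroup.of false)⁻¹ *
     (FreeGroup.of true ^ kAlpha n)⁻¹}

/-- The group `K_n`, given by the presentation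
`⟨a, b ∣ a^8 = 1, b^(2^(n-2)) = a^4, b a b⁻¹ = a^α⟩`, where `α = -1` if `n` is even
and `α = 3` if `n` is odd. -/
abbrev K (n : ℕ) : Type := PresentedGroup (kRels n)

/-- The generator `a` of `K_n`. -/
def ka (n : ℕ) : K n := PresentedGroup.of true

/-- The generator `b` of `K_n`. -/
def kb (n : ℕ) : K n := PresentedGroup.of false

open Multiplicative SemidirectProduct

namespace K16

/-- α as element of ZMod 8 -/
def uu (n : ℕ) : ZMod 8 := ((kAlpha n : ℤ) : ZMod 8)

lemma uu_mul_self (n : ℕ) : uu n * uu n = 1 := by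
  unfold uu kAlpha; split <;> decide

lemma uu_mul_four (n : ℕ) : uu n * 4 = 4 := by
  unfold uu kAlpha; split <;> decide

/-- the automorphism x ↦ α x of ZMod 8 (multiplicatively) -/
def sigma (n : ℕ) : MulAut (Multiplicative (ZMod 8)) where
  toFun x := ofAdd (uu n * x.toAdd)
  invFun x := ofAdd (uu n * x.toAdd)
  left_inv x := by simp [← mul_assoc, uu_mul_self]
  right_inv x := by simp [← mul_assoc, uu_mul_self]
  map_mul' x y := by simp [mul_add, ofAdd_add]

lemma sigma_apply (n : ℕ) (x : Multiplicative (ZMod 8)) :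
    sigma n x = ofAdd (uu n * x.toAdd) := rfl

lemma sigma_mul_self (n : ℕ) : sigma n * sigma n = 1 := by
  ext x
  simp [MulAut.mul_apply, sigma_apply, ← mul_assoc, uu_mul_self]

lemma even_val_add (n : ℕ) (x y : ZMod (2 ^ (n - 1))) :
    Even ((x + y).val) ↔ Even (x.val + y.val) := by
  rw [ZMod.val_add, Nat.even_iff, Nat.even_iff]
  rcases le_or_gt n 1 with h | h
  · have h1 : (2 : ℕ) ^ (n - 1) = 1 := by
      interval_cases n <;> rfl
    have hx := ZMod.val_lt x
    have hy := ZMod.val_lt y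
    simp only [h1] at hx hy ⊢
    omega
  · rw [Nat.mod_mod_of_dvd _ (dvd_pow_self 2 (by omega : n - 1 ≠ 0))]

/-- the action of ZMod (2^(n-1)) on ZMod 8 -/
def phi (n : ℕ) : Multiplicative (ZMod (2 ^ (n - 1))) →* MulAut (Multiplicative (ZMod 8)) :=
  MonoidHom.mk' (fun j => if Even j.toAdd.val then 1 else sigma n) (by
    intro x y
    have h : toAdd (x * y) = toAdd x + toAdd y := rfl
    rcases Nat.even_or_odd (toAdd x).val with hx | hx <;>
      rcases Nat.even_or_odd (toAdd y).val with hy | hy <;>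
      simp only [h, even_val_add, ← Nat.not_even_iff_odd] at * <;>
      simp [hx, hy, Nat.even_add, sigma_mul_self, ← Nat.not_even_iff_odd] at * <;>
      simp [hx, hy, sigma_mul_self])

lemma phi_even {n : ℕ} {j : Multiplicative (ZMod (2 ^ (n - 1)))} (h : Even j.toAdd.val) :
    phi n j = 1 := by simp [phi, h]

lemma phi_odd {n : ℕ} {j : Multiplicative (ZMod (2 ^ (n - 1)))} (h : ¬Even j.toAdd.val) :
    phi n j = sigma n := by simp [phi, h]

/-- auxiliary semidirect product of order 2^(n+2) -/
abbrev P (n : ℕ) : Type :=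
  Multiplicative (ZMod 8) ⋊[phi n] Multiplicative (ZMod (2 ^ (n - 1)))

def A (n : ℕ) : P n := inl (ofAdd 1)
def B (n : ℕ) : P n := inr (ofAdd 1)
def z (n : ℕ) : P n := ⟨ofAdd 4, ofAdd ((2 ^ (n - 2) : ℕ) : ZMod (2 ^ (n - 1)))⟩


lemma A_pow (n : ℕ) (k : ℕ) : A n ^ k = inl (ofAdd ((k : ZMod 8))) := by
  rw [A, ← map_pow]
  congr 1
  rw [← ofAdd_nsmul, nsmul_eq_mul, mul_one]

lemma A_zpow (n : ℕ) (k : ℤ) : A n ^ k = inl (ofAdd ((k : ZMod 8))) := by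
  rw [A, ← map_zpow]
  congr 1
  rw [← ofAdd_zsmul, zsmul_eq_mul, mul_one]

lemma B_pow (n : ℕ) (k : ℕ) : B n ^ k = inr (ofAdd ((k : ZMod (2 ^ (n - 1))))) := by
  rw [B, ← map_pow]
  congr 1
  rw [← ofAdd_nsmul, nsmul_eq_mul, mul_one]

lemma two_pow_lt (n : ℕ) (hn : 4 ≤ n) : 2 ^ (n - 2) < 2 ^ (n - 1) :=
  Nat.pow_lt_pow_right one_lt_two (by omega)

lemma t_val_even (n : ℕ) (hn : 4 ≤ n) :
    Even (((2 ^ (n - 2) : ℕ) : ZMod (2 ^ (n - 1))).val) := by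
  rw [ZMod.val_cast_of_lt (two_pow_lt n hn)]
  exact (Nat.even_pow' (by omega)).2 even_two

lemma one_lt_mod (n : ℕ) (hn : 4 ≤ n) : 1 < 2 ^ (n - 1) := by
  have := Nat.one_lt_two_pow_iff (n := n - 1)
  omega

lemma one_val_odd (n : ℕ) (hn : 4 ≤ n) :
    ¬ Even ((1 : ZMod (2 ^ (n - 1))).val) := by
  haveI : Fact (1 < 2 ^ (n - 1)) := ⟨one_lt_mod n hn⟩
  rw [ZMod.val_one]
  decide

lemma hA8 (n : ℕ) : A n ^ 8 = 1 := by
  rw [A_pow]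
  norm_num
  rfl

lemma inr_mul_inl (n : ℕ) (g : Multiplicative (ZMod (2 ^ (n - 1))))
    (m : Multiplicative (ZMod 8)) : (inr g : P n) * inl m = ⟨phi n g m, g⟩ := by
  ext <;> simp

lemma hBAB (n : ℕ) (hn : 4 ≤ n) :
    B n * A n * (B n)⁻¹ = A n ^ ((kAlpha n)) := by
  rw [A_zpow, A, B, ← map_inv, ← inl_aut]
  rw [phi_odd (by simpa using one_val_odd n hn)]
  rw [sigma_apply]
  congr 1
  rw [toAdd_ofAdd, uu, mul_one]

lemma phi_fix_four (n : ℕ) (h : Multiplicative (ZMod (2 ^ (n - 1)))) :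
    phi n h (ofAdd (4 : ZMod 8)) = ofAdd (4 : ZMod 8) := by
  rcases Nat.even_or_odd (toAdd h).val with he | ho
  · rw [phi_even he]; rfl
  · rw [phi_odd (Nat.not_even_iff_odd.2 ho), sigma_apply, toAdd_ofAdd, uu_mul_four]

lemma z_eq (n : ℕ) (hn : 4 ≤ n) : B n ^ 2 ^ (n - 2) * (A n ^ 4)⁻¹ = z n := by
  rw [B_pow, A_pow]
  have h4 : ((inl (ofAdd (((4 : ℕ) : ZMod 8))) : P n))⁻¹ = inl (ofAdd (4 : ZMod 8)) := by
    rw [← map_inv]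
    congr 1
  rw [h4, inr_mul_inl, phi_fix_four, z]

lemma z_sq (n : ℕ) (hn : 4 ≤ n) : z n * z n = 1 := by
  rw [z, mul_def]
  dsimp only
  rw [phi_fix_four]
  apply SemidirectProduct.ext
  · show ofAdd (4 : ZMod 8) * ofAdd 4 = 1
    decide
  · show ofAdd ((2 ^ (n - 2) : ℕ) : ZMod (2 ^ (n - 1))) * ofAdd ((2 ^ (n - 2) : ℕ) : ZMod (2 ^ (n - 1))) = 1
    rw [← ofAdd_add, ← Nat.cast_add]
    have h : (2 ^ (n - 2) + 2 ^ (n - 2) : ℕ) = 2 ^ (n - 1) := by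
      have h2 : n - 1 = (n - 2) + 1 := by omega
      rw [h2, pow_succ]; ring
    rw [h, ZMod.natCast_self]
    rfl

lemma z_ne_one (n : ℕ) : z n ≠ 1 := by
  intro h
  have := congrArg SemidirectProduct.left h
  rw [z, one_left] at this
  have h4 : (4 : ZMod 8) = 0 := by
    have := congrArg Multiplicative.toAdd this
    simpa using this
  exact absurd h4 (by decide)

lemma z_comm (n : ℕ) (hn : 4 ≤ n) (g : P n) : g * z n = z n * g := by
  rcases g with ⟨m, h⟩
  rw [z, mul_def, mul_def]
  dsimp only
  apply SemidirectProduct.ext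
  · show m * phi n h (ofAdd 4) = ofAdd 4 * phi n (ofAdd _) m
    rw [phi_fix_four, phi_even (by simpa using t_val_even n hn), MulAut.one_apply, mul_comm]
  · exact mul_comm _ _


open Subgroup

def zN (n : ℕ) : Subgroup (P n) := Subgroup.normalClosure {z n}

instance (n : ℕ) : (zN n).Normal := Subgroup.normalClosure_normal

abbrev Q (n : ℕ) : Type := P n ⧸ zN n

lemma zpowers_z_normal (n : ℕ) (hn : 4 ≤ n) : (Subgroup.zpowers (z n)).Normal := by
  constructor
  intro x hx g
  have hc : g * x = x * g := by
    obtain ⟨k, rfl⟩ := Subgroup.mem_zpowers_iff.1 hx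
    exact (Commute.zpow_right (z_comm n hn g) k)
  rw [hc, mul_inv_cancel_right]
  exact hx

lemma zN_eq (n : ℕ) (hn : 4 ≤ n) : zN n = Subgroup.zpowers (z n) := by
  haveI := zpowers_z_normal n hn
  refine le_antisymm (Subgroup.normalClosure_le_normal ?_) (Subgroup.zpowers_le.2 ?_)
  · simp [Subgroup.mem_zpowers]
  · exact Subgroup.subset_normalClosure rfl

lemma mem_zN_iff (n : ℕ) (hn : 4 ≤ n) (p : P n) : p ∈ zN n ↔ p = 1 ∨ p = z n := by
  rw [zN_eq n hn]
  constructor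
  · intro hp
    obtain ⟨k, rfl⟩ := Subgroup.mem_zpowers_iff.1 hp
    have hz2 : z n ^ (2 : ℤ) = 1 := by
      rw [zpow_two]; exact z_sq n hn
    rcases Int.even_or_odd k with ⟨m, rfl⟩ | ⟨m, rfl⟩
    · left
      have : (m + m : ℤ) = 2 * m := by ring
      rw [this, zpow_mul, hz2, one_zpow]
    · right
      rw [zpow_add, zpow_mul, hz2, one_zpow, one_mul, zpow_one]
  · rintro (rfl | rfl)
    · exact Subgroup.one_mem _
    · exact Subgroup.mem_zpowers _

lemma card_P (n : ℕ) (hn : 4 ≤ n) : Nat.card (P n) = 2 ^ (n + 2) := by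
  have e : P n ≃ Multiplicative (ZMod 8) × Multiplicative (ZMod (2 ^ (n - 1))) :=
    { toFun := fun p => (p.left, p.right)
      invFun := fun q => ⟨q.1, q.2⟩
      left_inv := fun p => rfl
      right_inv := fun q => rfl }
  rw [Nat.card_congr (e.trans (Equiv.prodCongr Multiplicative.toAdd Multiplicative.toAdd)),
    Nat.card_prod, Nat.card_zmod, Nat.card_zmod]
  rw [(by norm_num : (8 : ℕ) = 2 ^ 3), ← pow_add]
  congr 1
  omega

def pr (n : ℕ) : P n →* Q n := QuotientGroup.mk' (zN n)

lemma orderOf_z (n : ℕ) (hn : 4 ≤ n) : orderOf (z n) = 2 :=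
  orderOf_eq_prime (by rw [pow_two]; exact z_sq n hn) (z_ne_one n)

lemma card_Q (n : ℕ) (hn : 4 ≤ n) : Nat.card (Q n) = 2 ^ (n + 1) := by
  have hc : Nat.card (zN n) = 2 := by
    rw [zN_eq n hn, Nat.card_zpowers, orderOf_z n hn]
  have h1 := Subgroup.card_eq_card_quotient_mul_card_subgroup (zN n)
  rw [card_P n hn, hc] at h1
  have h2 : (2 : ℕ) ^ (n + 2) = 2 ^ (n + 1) * 2 := by rw [pow_succ]
  exact Nat.eq_of_mul_eq_mul_right (by norm_num) ((h2 ▸ h1).symm)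

lemma cast_ne (n : ℕ) (hn : 4 ≤ n) : ((2 ^ (n - 2) : ℕ) : ZMod (2 ^ (n - 1))) ≠ 0 := by
  intro h
  have h2 := congrArg ZMod.val h
  rw [ZMod.val_cast_of_lt (two_pow_lt n hn), ZMod.val_zero] at h2
  exact (Nat.two_pow_pos (n - 2)).ne' h2

lemma two_pow_order {G : Type*} [Group G] (x : G) (k : ℕ) (h1 : x ^ (2 ^ (k + 1)) = 1)
    (h2 : x ^ (2 ^ k) ≠ 1) : orderOf x = 2 ^ (k + 1) := by
  have hd := orderOf_dvd_of_pow_eq_one h1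
  obtain ⟨j, hj, hje⟩ := (Nat.dvd_prime_pow Nat.prime_two).1 hd
  rcases Nat.lt_or_ge j (k + 1) with h | h
  · exact absurd (orderOf_dvd_iff_pow_eq_one.1 (hje ▸ pow_dvd_pow 2 (by omega : j ≤ k))) h2
  · rw [hje]; congr 1; omega

lemma qA4_ne_one (n : ℕ) (hn : 4 ≤ n) : (pr n (A n)) ^ 4 ≠ 1 := by
  rw [← map_pow, A_pow, pr, QuotientGroup.mk'_apply]
  intro h
  rcases (mem_zN_iff n hn _).1 ((QuotientGroup.eq_one_iff _).1 h) with h1 | h1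
  · have h2 : ofAdd (((4 : ℕ) : ZMod 8)) = (1 : Multiplicative (ZMod 8)) :=
      congrArg SemidirectProduct.left h1
    exact absurd h2 (by decide)
  · have h2 : (1 : Multiplicative (ZMod (2 ^ (n - 1)))) =
        ofAdd ((2 ^ (n - 2) : ℕ) : ZMod (2 ^ (n - 1))) := congrArg SemidirectProduct.right h1
    exact cast_ne n hn (congrArg Multiplicative.toAdd h2).symm

lemma qA8 (n : ℕ) : (pr n (A n)) ^ 8 = 1 := by
  rw [← map_pow, hA8, map_one]

lemma orderOf_qA (n : ℕ) (hn : 4 ≤ n) : orderOf (pr n (A n)) = 8 := by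
  have := two_pow_order (pr n (A n)) 2 (by norm_num; exact qA8 n) (by norm_num; exact qA4_ne_one n hn)
  norm_num at this
  exact this

lemma qB_halfpow_ne_one (n : ℕ) (hn : 4 ≤ n) : (pr n (B n)) ^ (2 ^ (n - 2)) ≠ 1 := by
  rw [← map_pow, B_pow, pr, QuotientGroup.mk'_apply]
  intro h
  rcases (mem_zN_iff n hn _).1 ((QuotientGroup.eq_one_iff _).1 h) with h1 | h1
  · have h2 : ofAdd ((2 ^ (n - 2) : ℕ) : ZMod (2 ^ (n - 1))) =
        (1 : Multiplicative (ZMod (2 ^ (n - 1)))) := congrArg SemidirectProduct.right h1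
    exact cast_ne n hn (congrArg Multiplicative.toAdd h2)
  · have h2 : (1 : Multiplicative (ZMod 8)) = ofAdd ((4 : ZMod 8)) :=
      congrArg SemidirectProduct.left h1
    exact absurd h2 (by decide)

lemma qB_fullpow (n : ℕ) : (pr n (B n)) ^ (2 ^ (n - 1)) = 1 := by
  rw [← map_pow, B_pow, ZMod.natCast_self]
  show pr n (inr (ofAdd 0)) = 1
  rw [ofAdd_zero, map_one, map_one]

lemma orderOf_qB (n : ℕ) (hn : 4 ≤ n) : orderOf (pr n (B n)) = 2 ^ (n - 1) := by
  have h : n - 1 = (n - 2) + 1 := by omega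
  conv_rhs => rw [h]
  refine two_pow_order _ _ ?_ (qB_halfpow_ne_one n hn)
  rw [← h]
  exact qB_fullpow n

lemma qrel2 (n : ℕ) (hn : 4 ≤ n) : (pr n (B n)) ^ (2 ^ (n - 2)) = (pr n (A n)) ^ 4 := by
  have h : pr n (B n ^ 2 ^ (n - 2) * (A n ^ 4)⁻¹) = 1 := by
    rw [z_eq n hn]
    exact (QuotientGroup.eq_one_iff _).2 (Subgroup.subset_normalClosure rfl)
  rwa [map_mul, map_inv, map_pow, map_pow, mul_inv_eq_one] at h

lemma qrel3 (n : ℕ) (hn : 4 ≤ n) :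
    pr n (B n) * pr n (A n) * (pr n (B n))⁻¹ = pr n (A n) ^ ((kAlpha n)) := by
  rw [← map_inv, ← map_mul, ← map_mul, ← map_zpow, hBAB n hn]

-- ### The presented group side

lemma mk_rel (n : ℕ) {r : FreeGroup Bool} (hr : r ∈ kRels n) :
    PresentedGroup.mk (kRels n) r = 1 :=
  (QuotientGroup.eq_one_iff _).2 (Subgroup.subset_normalClosure hr)

lemma krel1 (n : ℕ) : ka n ^ 8 = 1 := by
  have h := mk_rel n (Set.mem_insert _ _ : FreeGroup.of true ^ 8 ∈ kRels n)
  rwa [map_pow] at h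

lemma krel2 (n : ℕ) : kb n ^ 2 ^ (n - 2) = ka n ^ 4 := by
  have h := mk_rel n (show FreeGroup.of false ^ 2 ^ (n - 2) * (FreeGroup.of true ^ 4)⁻¹ ∈ kRels n
    from Set.mem_insert_iff.2 (Or.inr (Set.mem_insert _ _)))
  rwa [map_mul, map_inv, map_pow, map_pow, mul_inv_eq_one] at h

lemma krel3 (n : ℕ) : kb n * ka n * (kb n)⁻¹ = ka n ^ kAlpha n := by
  have h := mk_rel n (show FreeGroup.of false * FreeGroup.of true * (FreeGroup.of false)⁻¹ *
      (FreeGroup.of true ^ kAlpha n)⁻¹ ∈ kRels n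
    from Set.mem_insert_iff.2 (Or.inr (Set.mem_insert_iff.2 (Or.inr rfl))))
  rwa [map_mul, map_mul, map_mul, map_inv, map_inv, map_zpow, mul_inv_eq_one] at h

lemma hclosure (n : ℕ) : Subgroup.closure {ka n, kb n} = ⊤ := by
  have h : ({ka n, kb n} : Set (K n)) = Set.range (PresentedGroup.of : Bool → K n) := by
    ext x
    constructor
    · rintro (rfl | rfl)
      exacts [⟨true, rfl⟩, ⟨false, rfl⟩]
    · rintro ⟨b, rfl⟩
      cases b
      · right; rfl
      · left; rfl
  rw [h, PresentedGroup.closure_range_of]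

lemma kb_fullpow (n : ℕ) (hn : 4 ≤ n) : kb n ^ 2 ^ (n - 1) = 1 := by
  have h : n - 1 = (n - 2) + 1 := by omega
  rw [h, pow_succ, pow_mul, krel2 n, ← pow_mul]
  norm_num
  exact krel1 n

lemma conj_zpow' {G : Type*} [Group G] (g x : G) (k : ℤ) :
    g * x ^ k * g⁻¹ = (g * x * g⁻¹) ^ k := by
  have h := map_zpow (MulAut.conj g) x k
  simpa [MulAut.conj_apply] using h

lemma ka_zpow_sq (n : ℕ) : ka n ^ (kAlpha n * kAlpha n) = ka n := by
  have h8 : ka n ^ (8 : ℤ) = 1 := by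
    rw [show (8 : ℤ) = ((8 : ℕ) : ℤ) by norm_num, zpow_natCast, krel1]
  unfold kAlpha
  split
  · norm_num
  · rw [show ((3 : ℤ) * 3) = 8 + 1 by norm_num, zpow_add, h8, one_mul, zpow_one]

lemma conj_a' (n : ℕ) : (kb n)⁻¹ * ka n * kb n = ka n ^ kAlpha n := by
  have h2 : kb n * ka n ^ kAlpha n * (kb n)⁻¹ = ka n := by
    rw [conj_zpow', krel3, ← zpow_mul, ka_zpow_sq]
  conv_lhs => rw [← h2]
  group

lemma normal_N (n : ℕ) : (Subgroup.zpowers (ka n)).Normal := by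
  rw [← Subgroup.normalizer_eq_top_iff, eq_top_iff, ← hclosure n]
  refine (Subgroup.closure_le _).2 ?_
  rintro x hx
  simp only [Set.mem_insert_iff, Set.mem_singleton_iff] at hx
  rcases hx with rfl | rfl
  · exact Subgroup.le_normalizer (Subgroup.mem_zpowers _)
  · rw [SetLike.mem_coe, Subgroup.mem_normalizer_iff]
    intro h
    constructor
    · intro hh
      obtain ⟨k, rfl⟩ := Subgroup.mem_zpowers_iff.1 hh
      rw [conj_zpow', krel3]
      exact Subgroup.mem_zpowers_iff.2 ⟨kAlpha n * k, by rw [zpow_mul]⟩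
    · intro hh
      obtain ⟨k, hk⟩ := Subgroup.mem_zpowers_iff.1 hh
      have h3 : h = (kb n)⁻¹ * ka n ^ k * kb n := by
        rw [hk]; group
      have h4 : (kb n)⁻¹ * ka n ^ k * ((kb n)⁻¹)⁻¹ = ((kb n)⁻¹ * ka n * ((kb n)⁻¹)⁻¹) ^ k :=
        conj_zpow' _ _ _
      rw [inv_inv] at h4
      rw [h3, h4, conj_a']
      exact Subgroup.mem_zpowers_iff.2 ⟨kAlpha n * k, by rw [zpow_mul]⟩

end K16

open K16 Multiplicative SemidirectProduct in
/-- For `n ≥ 4`, the group `K_n` has order exactly `2^(n+1)`; moreover `a` has order `8`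
and `b` has order `2^(n-1)`. -/
theorem stmt16 (n : ℕ) (hn : 4 ≤ n) :
    Nat.card (K n) = 2 ^ (n + 1) ∧ orderOf (ka n) = 8 ∧ orderOf (kb n) = 2 ^ (n - 1) := by
  -- the homomorphism to the concrete group `Q n`
  have hrels : ∀ r ∈ kRels n,
      FreeGroup.lift (fun x => if x then pr n (A n) else pr n (B n)) r = 1 := by
    intro r hr
    simp only [kRels, Set.mem_insert_iff, Set.mem_singleton_iff] at hr
    rcases hr with rfl | rfl | rfl
    · rw [map_pow, FreeGroup.lift_apply_of]
      exact qA8 n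
    · rw [map_mul, map_inv, map_pow, map_pow, FreeGroup.lift_apply_of, FreeGroup.lift_apply_of,
        mul_inv_eq_one]
      exact qrel2 n hn
    · rw [map_mul, map_mul, map_mul, map_inv, map_inv, map_zpow, FreeGroup.lift_apply_of,
        FreeGroup.lift_apply_of, mul_inv_eq_one]
      exact qrel3 n hn
  set f : K n →* Q n := PresentedGroup.toGroup hrels with hf
  have hfa : f (ka n) = pr n (A n) := PresentedGroup.toGroup.of hrels
  have hfb : f (kb n) = pr n (B n) := PresentedGroup.toGroup.of hrels
  have hfsurj : Function.Surjective f := by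
    intro q
    obtain ⟨p, rfl⟩ := QuotientGroup.mk'_surjective (zN n) q
    refine ⟨ka n ^ (toAdd p.left).val * kb n ^ (toAdd p.right).val, ?_⟩
    haveI : NeZero (2 ^ (n - 1)) := ⟨(Nat.two_pow_pos _).ne'⟩
    rw [map_mul, map_pow, map_pow, hfa, hfb, ← map_pow, ← map_pow, A_pow, B_pow, ← map_mul]
    show pr n _ = pr n p
    congr 1
    rw [← mk_eq_inl_mul_inr]
    apply SemidirectProduct.ext
    · show ofAdd (((toAdd p.left).val : ZMod 8)) = p.left
      rw [ZMod.natCast_rightInverse (toAdd p.left), ofAdd_toAdd]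
    · show ofAdd (((toAdd p.right).val : ZMod (2 ^ (n - 1)))) = p.right
      rw [ZMod.natCast_rightInverse (toAdd p.right), ofAdd_toAdd]
  -- the subgroup generated by `a`
  haveI hN : (Subgroup.zpowers (ka n)).Normal := normal_N n
  set N : Subgroup (K n) := Subgroup.zpowers (ka n) with hNdef
  have hka1 : QuotientGroup.mk' N (ka n) = 1 :=
    (QuotientGroup.eq_one_iff _).2 (Subgroup.mem_zpowers _)
  have hbar_pow : (QuotientGroup.mk' N (kb n)) ^ 2 ^ (n - 2) = 1 := by
    rw [← map_pow, krel2 n, map_pow, hka1, one_pow]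
  have hbar_dvd : orderOf (QuotientGroup.mk' N (kb n)) ∣ 2 ^ (n - 2) :=
    orderOf_dvd_of_pow_eq_one hbar_pow
  have htop : Subgroup.zpowers (QuotientGroup.mk' N (kb n)) = ⊤ := by
    rw [eq_top_iff, ← Subgroup.map_top_of_surjective _ (QuotientGroup.mk'_surjective N),
      ← hclosure n, MonoidHom.map_closure]
    refine (Subgroup.closure_le _).2 ?_
    rintro x ⟨y, hy, rfl⟩
    simp only [Set.mem_insert_iff, Set.mem_singleton_iff] at hy
    rcases hy with rfl | rfl
    · rw [SetLike.mem_coe, hka1]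
      exact Subgroup.one_mem _
    · exact Subgroup.mem_zpowers _
  -- finiteness
  have hfina : IsOfFinOrder (ka n) := by
    rw [← orderOf_pos_iff]
    exact Nat.pos_of_dvd_of_pos (orderOf_dvd_of_pow_eq_one (krel1 n)) (by norm_num)
  have hfinb : IsOfFinOrder (QuotientGroup.mk' N (kb n)) := by
    rw [← orderOf_pos_iff]
    exact Nat.pos_of_dvd_of_pos hbar_dvd (Nat.two_pow_pos _)
  haveI : Finite N := Set.Finite.to_subtype (finite_zpowers.2 hfina)
  haveI hfq : Finite (K n ⧸ N) := by
    haveI h1 : Finite (Subgroup.zpowers (QuotientGroup.mk' N (kb n))) :=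
      Set.Finite.to_subtype (finite_zpowers.2 hfinb)
    haveI h2 : Finite (⊤ : Subgroup (K n ⧸ N)) := htop ▸ h1
    exact Finite.of_equiv _ Subgroup.topEquiv.toEquiv
  haveI : Finite (K n) :=
    Finite.of_equiv _ (Subgroup.groupEquivQuotientProdSubgroup (s := N)).symm
  -- counting
  have hcard_quot : Nat.card (K n ⧸ N) = orderOf (QuotientGroup.mk' N (kb n)) := by
    calc Nat.card (K n ⧸ N) = Nat.card (⊤ : Subgroup (K n ⧸ N)) :=
          (Nat.card_congr Subgroup.topEquiv.toEquiv).symm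
      _ = Nat.card (Subgroup.zpowers (QuotientGroup.mk' N (kb n))) := by rw [htop]
      _ = orderOf (QuotientGroup.mk' N (kb n)) := Nat.card_zpowers _
  have hcard_N : Nat.card N = orderOf (ka n) := Nat.card_zpowers _
  have hub : Nat.card (K n) ≤ 2 ^ (n + 1) := by
    rw [Subgroup.card_eq_card_quotient_mul_card_subgroup N, hcard_quot, hcard_N]
    have h1 : orderOf (QuotientGroup.mk' N (kb n)) ≤ 2 ^ (n - 2) :=
      Nat.le_of_dvd (Nat.two_pow_pos _) hbar_dvd
    have h2 : orderOf (ka n) ≤ 8 :=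
      Nat.le_of_dvd (by norm_num) (orderOf_dvd_of_pow_eq_one (krel1 n))
    calc orderOf (QuotientGroup.mk' N (kb n)) * orderOf (ka n) ≤ 2 ^ (n - 2) * 8 :=
          Nat.mul_le_mul h1 h2
      _ = 2 ^ (n + 1) := by
          rw [(by norm_num : (8 : ℕ) = 2 ^ 3), ← pow_add]
          congr 1
          omega
  have hlb : 2 ^ (n + 1) ≤ Nat.card (K n) := by
    rw [← card_Q n hn]
    exact Nat.card_le_card_of_surjective f hfsurj
  refine ⟨le_antisymm hub hlb, ?_, ?_⟩
  · have hd1 : orderOf (ka n) ∣ 8 := orderOf_dvd_of_pow_eq_one (krel1 n)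
    have hd2 : (8 : ℕ) ∣ orderOf (ka n) := by
      have h := orderOf_map_dvd f (ka n)
      rwa [hfa, orderOf_qA n hn] at h
    exact Nat.dvd_antisymm hd1 hd2
  · have hd1 : orderOf (kb n) ∣ 2 ^ (n - 1) :=
      orderOf_dvd_of_pow_eq_one (kb_fullpow n hn)
    have hd2 : (2 : ℕ) ^ (n - 1) ∣ orderOf (kb n) := by
      have h := orderOf_map_dvd f (kb n)
      rwa [hfb, orderOf_qB n hn] at h
    exact Nat.dvd_antisymm hd1 hd2
end

section
/- Let n ≥ 4. In the group K_n, the subgroup Q = ⟨b, a^2 b^{2^{n-3}}⟩ has index two and is isomorphic to the quasi-abelian group QA_n; moreover K_n and Q each contain exactly three involutions. -/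
namespace Stmt17

instance instNZpow (k : ℕ) : NeZero ((2:ℕ)^k) := ⟨by positivity⟩

/-- the unit `α` as an element of `ZMod 8` (for `n = p+4`). -/
def abar (p : ℕ) : ZMod 8 := if Even p then -1 else 3

lemma abar_mul_abar (p : ℕ) : abar p * abar p = 1 := by
  unfold abar; split_ifs <;> decide

lemma abar_mul_four (p : ℕ) : abar p * 4 = 4 := by
  unfold abar; split_ifs <;> decide

/-- twisting factor -/
def ee (p : ℕ) (j : ZMod (2^(p+3))) : ZMod 8 := if Even j.val then 1 else abar p

lemma ee_sq (p : ℕ) (j : ZMod (2^(p+3))) : ee p j * ee p j = 1 := by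
  unfold ee; split_ifs
  · decide
  · exact abar_mul_abar p

lemma ee_mul_four (p : ℕ) (j : ZMod (2^(p+3))) : ee p j * 4 = 4 := by
  unfold ee; split_ifs
  · decide
  · exact abar_mul_four p

lemma ee_add (p : ℕ) (j j' : ZMod (2^(p+3))) : ee p (j + j') = ee p j * ee p j' := by
  have hval : (j + j').val = (j.val + j'.val) % 2^(p+3) := ZMod.val_add j j'
  have hpar : Even ((j + j').val) ↔ (Even (j.val + j'.val)) := by
    rw [hval, Nat.even_iff, Nat.even_iff, Nat.mod_mod_of_dvd _ ⟨2^(p+2), by ring⟩]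
  unfold ee
  rcases Nat.even_or_odd j.val with hj | hj <;> rcases Nat.even_or_odd j'.val with hj' | hj'
  · rw [if_pos hj, if_pos hj', if_pos (hpar.mpr (Nat.even_add.mpr (by tauto))), one_mul]
  · rw [if_pos hj, if_neg (Nat.not_even_iff_odd.mpr hj'), one_mul,
      if_neg]
    rw [hpar, Nat.even_add]
    simp [hj, Nat.not_even_iff_odd.mpr hj']
  · rw [if_neg (Nat.not_even_iff_odd.mpr hj), if_pos hj', mul_one, if_neg]
    rw [hpar, Nat.even_add]
    simp [hj', Nat.not_even_iff_odd.mpr hj]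
  · rw [if_neg (Nat.not_even_iff_odd.mpr hj), if_neg (Nat.not_even_iff_odd.mpr hj'),
      abar_mul_abar, if_pos]
    rw [hpar, Nat.even_add]
    simp [Nat.not_even_iff_odd.mpr hj, Nat.not_even_iff_odd.mpr hj']

lemma ee_zero (p : ℕ) : ee p 0 = 1 := by
  unfold ee; rw [if_pos]; simp [ZMod.val_zero]

lemma ee_neg (p : ℕ) (j : ZMod (2^(p+3))) : ee p (-j) = ee p j := by
  have h : ee p j * ee p (-j) = 1 := by rw [← ee_add]; simp [ee_zero]
  calc ee p (-j) = (ee p j * ee p j) * ee p (-j) := by rw [ee_sq, one_mul]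
  _ = ee p j * (ee p j * ee p (-j)) := by ring
  _ = ee p j := by rw [h, mul_one]

/-- The concrete model of `K (p+4)` before quotienting: pairs `(i, j)` representing
`a^i b^j`, with `b` of order `2^(p+3)`. -/
@[ext] structure KM (p : ℕ) where
  i : ZMod 8
  j : ZMod (2^(p+3))

namespace KM

variable {p : ℕ}

instance : Mul (KM p) := ⟨fun w w' => ⟨w.i + ee p w.j * w'.i, w.j + w'.j⟩⟩
instance : One (KM p) := ⟨⟨0, 0⟩⟩
instance : Inv (KM p) := ⟨fun w => ⟨-(ee p w.j * w.i), -w.j⟩⟩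

lemma mul_def (w w' : KM p) : w * w' = ⟨w.i + ee p w.j * w'.i, w.j + w'.j⟩ := rfl
lemma one_def : (1 : KM p) = ⟨0, 0⟩ := rfl
lemma inv_def (w : KM p) : w⁻¹ = ⟨-(ee p w.j * w.i), -w.j⟩ := rfl

@[simp] lemma mul_i (w w' : KM p) : (w * w').i = w.i + ee p w.j * w'.i := rfl
@[simp] lemma mul_j (w w' : KM p) : (w * w').j = w.j + w'.j := rfl
@[simp] lemma one_i : (1 : KM p).i = 0 := rfl
@[simp] lemma one_j : (1 : KM p).j = 0 := rfl
@[simp] lemma inv_i (w : KM p) : (w⁻¹).i = -(ee p w.j * w.i) := rfl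
@[simp] lemma inv_j (w : KM p) : (w⁻¹).j = -w.j := rfl

instance : Group (KM p) where
  mul_assoc a b c := by
    ext
    · simp [ee_add]; ring
    · simp [add_assoc]
  one_mul w := by ext <;> simp [ee_zero]
  mul_one w := by ext <;> simp
  inv_mul_cancel w := by
    ext
    · simp [ee_neg]
    · simp

end KM


lemma zpow_reduce {G : Type*} [Group G] (g : G) (N : ℕ) (hN : 0 < N) (h : g ^ N = 1) (t : ℤ) :
    g ^ t = g ^ (t % N).toNat := by
  conv_lhs => rw [← Int.mul_ediv_add_emod t N]
  rw [zpow_add, zpow_mul, zpow_natCast, h, one_zpow, one_mul,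
    ← zpow_natCast, Int.toNat_of_nonneg (Int.emod_nonneg t (by positivity))]

lemma pow_reduce {G : Type*} [Group G] (g : G) {N : ℕ} (h : g ^ N = 1) (t : ℕ) :
    g ^ t = g ^ (t % N) := by
  conv_lhs => rw [← Nat.div_add_mod t N, pow_add, pow_mul, h, one_pow, one_mul]

section Model
variable (p : ℕ)

/-- generator `a` in the model -/
def aK : KM p := ⟨1, 0⟩
/-- generator `b` in the model -/
def bK : KM p := ⟨0, 1⟩
/-- the identification element, central of order 2 -/
def zK : KM p := ⟨4, 2^(p+2)⟩

lemma cast2pow (e : ℕ) : ((2^e : ℕ) : ZMod (2^(p+3))) = 2^e := by norm_cast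

lemma val_2pow {e : ℕ} (he : e < p + 3) : ((2^e : ZMod (2^(p+3)))).val = 2^e := by
  rw [← cast2pow]
  exact ZMod.val_cast_of_lt (Nat.pow_lt_pow_right (by norm_num) he)

lemma ee_2pow {e : ℕ} (he1 : 1 ≤ e) (he : e < p + 3) : ee p (2^e) = 1 := by
  unfold ee
  rw [if_pos]
  rw [val_2pow p he]
  exact (Nat.even_pow' (by omega)).mpr (by norm_num)

lemma aK_pow (t : ℕ) : (aK p) ^ t = ⟨(t : ZMod 8), 0⟩ := by
  induction t with
  | zero => simp [KM.one_def]
  | succ t ih =>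
    rw [pow_succ, ih, aK, KM.mul_def]
    ext
    · simp [ee_zero]
    · simp

lemma bK_pow (t : ℕ) : (bK p) ^ t = ⟨0, (t : ZMod (2^(p+3)))⟩ := by
  induction t with
  | zero => simp [KM.one_def]
  | succ t ih =>
    rw [pow_succ, ih, bK, KM.mul_def]
    ext
    · simp
    · push_cast
      ring

lemma aK_zpow (t : ℤ) : (aK p) ^ t = ⟨((t : ℤ) : ZMod 8), 0⟩ := by
  cases t with
  | ofNat s =>
    rw [Int.ofNat_eq_coe, zpow_natCast, aK_pow]
    norm_cast
  | negSucc s =>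
    rw [zpow_negSucc, aK_pow, KM.inv_def]
    ext
    · simp [ee_zero, Int.negSucc_eq]
    · simp

lemma zK_mul_comm (w : KM p) : zK p * w = w * zK p := by
  have hee : ee p ((2^(p+2) : ZMod (2^(p+3)))) = 1 := ee_2pow p (by omega) (by omega)
  rw [zK, KM.mul_def, KM.mul_def]
  ext
  · show 4 + ee p (2^(p+2)) * w.i = w.i + ee p w.j * 4
    rw [hee, ee_mul_four, one_mul, add_comm]
  · show 2^(p+2) + w.j = w.j + 2^(p+2)
    exact add_comm _ _

lemma two_pow_p2_add_self : (2^(p+2) : ZMod (2^(p+3))) + 2^(p+2) = 0 := by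
  rw [← cast2pow, ← Nat.cast_add, show 2^(p+2) + 2^(p+2) = 2^(p+3) by ring,
    ZMod.natCast_self]

lemma zK_sq : zK p * zK p = 1 := by
  have hee : ee p ((2^(p+2) : ZMod (2^(p+3)))) = 1 := ee_2pow p (by omega) (by omega)
  rw [zK, KM.mul_def, KM.one_def]
  ext
  · show (4 : ZMod 8) + ee p (2^(p+2)) * 4 = 0
    rw [hee, one_mul]; decide
  · show (2^(p+2) : ZMod (2^(p+3))) + 2^(p+2) = 0
    exact two_pow_p2_add_self p

lemma two_pow_p2_ne_zero : (2^(p+2) : ZMod (2^(p+3))) ≠ 0 := by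
  intro h
  have := val_2pow p (show p+2 < p+3 by omega)
  rw [h] at this
  simp only [ZMod.val_zero] at this
  exact absurd this.symm (by positivity)

lemma zK_ne_one : zK p ≠ 1 := by
  intro h
  have : (zK p).i = (1 : KM p).i := by rw [h]
  rw [zK, KM.one_i] at this
  have h4 : (4 : ZMod 8) = 0 := this
  exact absurd h4 (by decide)

/-- the subgroup we quotient by -/
def Zs : Subgroup (KM p) := Subgroup.zpowers (zK p)

instance : (Zs p).Normal := by
  constructor
  intro x hx g
  obtain ⟨k, rfl⟩ := Subgroup.mem_zpowers_iff.mp hx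
  have hc : Commute (zK p) g := (zK_mul_comm p g)
  have hck : Commute ((zK p) ^ k) g := hc.zpow_left k
  rw [← hck.eq]
  simpa [mul_assoc] using Subgroup.zpow_mem (Zs p) (Subgroup.mem_zpowers (zK p)) k

lemma mem_Zs_iff (x : KM p) : x ∈ Zs p ↔ x = 1 ∨ x = zK p := by
  constructor
  · intro hx
    obtain ⟨k, rfl⟩ := Subgroup.mem_zpowers_iff.mp hx
    have h2 : (zK p) ^ (2:ℕ) = 1 := by rw [pow_two, zK_sq]
    have hred := zpow_reduce (zK p) 2 (by norm_num) h2 k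
    norm_num at hred
    rw [hred]
    have hk : (k % 2).toNat = 0 ∨ (k % 2).toNat = 1 := by omega
    rcases hk with h | h <;> rw [h] <;> simp
  · rintro (rfl | rfl)
    · exact Subgroup.one_mem _
    · exact Subgroup.mem_zpowers _

end Model

section Quot
variable (p : ℕ)

/-- the concrete model of `K (p+4)` -/
abbrev Kc (p : ℕ) := KM p ⧸ Zs p

def mkc : KM p →* Kc p := QuotientGroup.mk' (Zs p)

lemma mkc_eq_one_iff (w : KM p) : mkc p w = 1 ↔ w = 1 ∨ w = zK p := by
  rw [mkc, QuotientGroup.mk'_apply, QuotientGroup.eq_one_iff, mem_Zs_iff]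

lemma mkc_eq_iff (w w' : KM p) : mkc p w = mkc p w' ↔ (w⁻¹ * w' = 1 ∨ w⁻¹ * w' = zK p) := by
  rw [mkc, QuotientGroup.mk'_apply, QuotientGroup.mk'_apply, QuotientGroup.eq, mem_Zs_iff]

lemma even_p4 : Even (p+4) ↔ Even p := by
  rw [Nat.even_add]
  exact ⟨fun h => h.mpr (by decide), fun h => iff_of_true h (by decide)⟩

lemma kAlpha_p4 : kAlpha (p+4) = if Even p then -1 else 3 := by
  rw [kAlpha, if_congr (even_p4 p) rfl rfl]

lemma kAlpha_cast : ((kAlpha (p+4) : ℤ) : ZMod 8) = abar p := by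
  rw [kAlpha_p4, abar]; split_ifs <;> simp

lemma one_lt_M : 1 < 2^(p+3) := by
  have h : (2:ℕ)^0 < 2^(p+3) := Nat.pow_lt_pow_right (by norm_num) (by omega)
  simpa using h

lemma val_one_M : (1 : ZMod (2^(p+3))).val = 1 := by
  rw [← Nat.cast_one]
  exact ZMod.val_cast_of_lt (one_lt_M p)

lemma ee_one : ee p 1 = abar p := by
  unfold ee
  rw [if_neg]
  rw [val_one_M]
  decide

lemma bK_inv : (bK p)⁻¹ = ⟨0, -1⟩ := by
  rw [bK, KM.inv_def]
  ext <;> simp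

lemma bKaKbKinv : bK p * aK p * (bK p)⁻¹ = ⟨abar p, 0⟩ := by
  rw [bK_inv, bK, aK, KM.mul_def, KM.mul_def]
  ext
  · simp [ee_one]
  · simp

/-- generator images for the map to the concrete model -/
def fgen : Bool → Kc p
  | true => mkc p (aK p)
  | false => mkc p (bK p)

lemma toKc_rels : ∀ r ∈ kRels (p+4), FreeGroup.lift (fgen p) r = 1 := by
  intro r hr
  have h2 : (p+4)-2 = p+2 := by omega
  simp only [kRels, h2, Set.mem_insert_iff, Set.mem_singleton_iff] at hr
  rcases hr with rfl | rfl | rfl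
  · rw [map_pow, FreeGroup.lift_apply_of]
    show (mkc p (aK p))^8 = 1
    rw [← map_pow, aK_pow]
    have : ((8:ℕ) : ZMod 8) = 0 := by decide
    rw [this]
    exact map_one _
  · rw [map_mul, map_pow, map_inv, map_pow, FreeGroup.lift_apply_of, FreeGroup.lift_apply_of]
    show (mkc p (bK p))^(2^(p+2)) * ((mkc p (aK p))^4)⁻¹ = 1
    rw [← map_pow, ← map_pow, ← map_inv, ← map_mul, mkc_eq_one_iff]
    right
    rw [bK_pow, aK_pow, KM.inv_def, KM.mul_def, zK]
    ext
    · show (0 : ZMod 8) + ee p _ * (-(ee p 0 * ((4:ℕ):ZMod 8))) = 4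
      rw [ee_zero, cast2pow, ee_2pow p (by omega) (by omega)]
      decide
    · show ((2^(p+2):ℕ) : ZMod (2^(p+3))) + -(0:ZMod (2^(p+3))) = 2^(p+2)
      rw [cast2pow]
      ring
  · simp only [map_mul, map_inv, map_zpow, FreeGroup.lift_apply_of]
    show mkc p (bK p) * mkc p (aK p) * (mkc p (bK p))⁻¹ *
      ((mkc p (aK p))^(kAlpha (p+4)))⁻¹ = 1
    rw [← map_zpow, ← map_inv, ← map_inv, ← map_mul, ← map_mul, ← map_mul,
      aK_zpow, kAlpha_cast, bKaKbKinv, mkc_eq_one_iff]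
    left
    rw [KM.inv_def, KM.mul_def, KM.one_def]
    ext
    · show abar p + ee p 0 * -(ee p 0 * abar p) = 0
      rw [ee_zero]
      ring
    · simp

/-- the canonical map from the presented group to the model -/
def toKc : K (p+4) →* Kc p := PresentedGroup.toGroup (toKc_rels p)

lemma toKc_a : toKc p (ka (p+4)) = mkc p (aK p) := PresentedGroup.toGroup.of _
lemma toKc_b : toKc p (kb (p+4)) = mkc p (bK p) := PresentedGroup.toGroup.of _

end Quot

section PG
variable (p : ℕ)

lemma conj_zpow' {G : Type*} [Group G] (g x : G) (s : ℤ) :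
    g * x ^ s * g⁻¹ = (g * x * g⁻¹) ^ s := by
  simpa [MulAut.conj_apply] using ((MulAut.conj g).map_zpow x s).symm

lemma conj_pow' {G : Type*} [Group G] (g x : G) (s : ℕ) :
    g * x ^ s * g⁻¹ = (g * x * g⁻¹) ^ s := by
  simpa [MulAut.conj_apply] using ((MulAut.conj g).map_pow x s).symm

lemma kr_one {r : FreeGroup Bool} (hr : r ∈ kRels (p+4)) :
    PresentedGroup.mk (kRels (p+4)) r = 1 :=
  (QuotientGroup.eq_one_iff r).mpr (Subgroup.subset_normalClosure hr)

lemma rel_a8 : (ka (p+4)) ^ 8 = 1 := by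
  have := kr_one p (show FreeGroup.of true ^ 8 ∈ kRels (p+4) from Set.mem_insert _ _)
  rw [map_pow] at this
  exact this

lemma rel_b : (kb (p+4)) ^ (2^(p+2)) = (ka (p+4)) ^ 4 := by
  have hm : FreeGroup.of false ^ 2 ^ ((p+4) - 2) * (FreeGroup.of true ^ 4)⁻¹ ∈ kRels (p+4) :=
    Set.mem_insert_of_mem _ (Set.mem_insert _ _)
  have h2 : (p+4)-2 = p+2 := by omega
  rw [h2] at hm
  have := kr_one p hm
  rw [map_mul, map_pow, map_inv, map_pow] at this
  exact mul_inv_eq_one.mp this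

lemma rel_conj : kb (p+4) * ka (p+4) * (kb (p+4))⁻¹ = (ka (p+4)) ^ (kAlpha (p+4)) := by
  have hm : FreeGroup.of false * FreeGroup.of true * (FreeGroup.of false)⁻¹ *
      (FreeGroup.of true ^ kAlpha (p+4))⁻¹ ∈ kRels (p+4) :=
    Set.mem_insert_of_mem _ (Set.mem_insert_of_mem _ rfl)
  have := kr_one p hm
  rw [map_mul, map_mul, map_mul, map_inv, map_inv, map_zpow] at this
  exact mul_inv_eq_one.mp this

lemma rel_b2M : (kb (p+4)) ^ (2^(p+3)) = 1 := by
  rw [show (2:ℕ)^(p+3) = 2^(p+2) * 2 by ring, pow_mul, rel_b, ← pow_mul]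
  exact rel_a8 p

lemma ka_alpha_sq : (ka (p+4)) ^ (kAlpha (p+4) * kAlpha (p+4)) = ka (p+4) := by
  rw [kAlpha_p4]
  split_ifs
  · norm_num
  · show (ka (p+4)) ^ ((9:ℤ)) = ka (p+4)
    rw [show (9:ℤ) = ((9:ℕ):ℤ) by norm_num, zpow_natCast,
      show (9:ℕ) = 8 + 1 by norm_num, pow_add, rel_a8, one_mul, pow_one]

lemma rel_conj_inv : (kb (p+4))⁻¹ * ka (p+4) * kb (p+4) = (ka (p+4)) ^ (kAlpha (p+4)) := by
  have h1 : kb (p+4) * ((kb (p+4))⁻¹ * ka (p+4) * kb (p+4)) * (kb (p+4))⁻¹ = ka (p+4) := by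
    group
  have h2 : kb (p+4) * ((ka (p+4)) ^ (kAlpha (p+4))) * (kb (p+4))⁻¹ = ka (p+4) := by
    rw [conj_zpow', rel_conj, ← zpow_mul]
    exact ka_alpha_sq p
  have := h1.trans h2.symm
  exact mul_left_cancel (mul_right_cancel this)

lemma conj_exists : ∀ t : ℤ, ∃ s : ℤ, (kb (p+4)) ^ t * ka (p+4) * (kb (p+4)) ^ (-t) =
    (ka (p+4)) ^ s := by
  intro t
  induction t using Int.induction_on with
  | zero => exact ⟨1, by simp⟩
  | succ t ih =>
    obtain ⟨s, hs⟩ := ih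
    refine ⟨kAlpha (p+4) * s, ?_⟩
    have : (kb (p+4)) ^ (t+1:ℤ) * ka (p+4) * (kb (p+4)) ^ (-(t+1:ℤ)) =
        kb (p+4) * ((kb (p+4)) ^ (t:ℤ) * ka (p+4) * (kb (p+4)) ^ (-t:ℤ)) * (kb (p+4))⁻¹ := by
      group
    rw [this, hs, conj_zpow', rel_conj, ← zpow_mul]
  | pred t ih =>
    obtain ⟨s, hs⟩ := ih
    refine ⟨kAlpha (p+4) * s, ?_⟩
    have : (kb (p+4)) ^ (-t-1:ℤ) * ka (p+4) * (kb (p+4)) ^ (-(-t-1:ℤ)) =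
        (kb (p+4))⁻¹ * ((kb (p+4)) ^ (-t:ℤ) * ka (p+4) * (kb (p+4)) ^ (t:ℤ)) * kb (p+4) := by
      group
    rw [this]
    have hs' : (kb (p+4)) ^ (-t:ℤ) * ka (p+4) * (kb (p+4)) ^ (t:ℤ) = (ka (p+4)) ^ s := by
      rw [← hs]
      group
    rw [hs']
    have : (kb (p+4))⁻¹ * (ka (p+4)) ^ s * kb (p+4) =
        ((kb (p+4))⁻¹ * ka (p+4) * kb (p+4)) ^ s := by
      have := conj_zpow' ((kb (p+4))⁻¹) (ka (p+4)) s
      simpa using this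
    rw [this, rel_conj_inv, ← zpow_mul]

/-- normal-form subgroup -/
def NF : Subgroup (K (p+4)) where
  carrier := {g | ∃ s t : ℤ, g = (ka (p+4)) ^ s * (kb (p+4)) ^ t}
  one_mem' := ⟨0, 0, by simp⟩
  mul_mem' := by
    rintro g g' ⟨s, t, rfl⟩ ⟨s', t', rfl⟩
    obtain ⟨c, hc⟩ := conj_exists p t
    refine ⟨s + c * s', t + t', ?_⟩
    have h1 : (kb (p+4)) ^ t * (ka (p+4)) ^ s' * ((kb (p+4)) ^ t)⁻¹ =
        (ka (p+4)) ^ (c * s') := by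
      rw [conj_zpow']
      rw [show (kb (p+4)) ^ t * ka (p+4) * ((kb (p+4)) ^ t)⁻¹ = (ka (p+4)) ^ c by
        rw [← hc]; group]
      rw [← zpow_mul]
    rw [zpow_add, zpow_add, ← h1]
    group
  inv_mem' := by
    rintro g ⟨s, t, rfl⟩
    obtain ⟨c, hc⟩ := conj_exists p (-t)
    refine ⟨c * (-s), -t, ?_⟩
    have h1 : (kb (p+4)) ^ (-t) * (ka (p+4)) ^ (-s) * ((kb (p+4)) ^ (-t))⁻¹ =
        (ka (p+4)) ^ (c * (-s)) := by
      rw [conj_zpow']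
      rw [show (kb (p+4)) ^ (-t) * ka (p+4) * ((kb (p+4)) ^ (-t))⁻¹ = (ka (p+4)) ^ c by
        rw [← hc]; group]
      rw [← zpow_mul]
    rw [mul_inv_rev, ← zpow_neg, ← zpow_neg, ← h1]
    group

lemma nf_all (g : K (p+4)) : ∃ s t : ℤ, g = (ka (p+4)) ^ s * (kb (p+4)) ^ t := by
  refine PresentedGroup.generated_by _ (NF p) ?_ g
  intro j
  cases j
  · exact ⟨0, 1, by simp [kb]⟩
  · exact ⟨1, 0, by simp [ka]⟩

lemma bounded_form (g : K (p+4)) :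
    ∃ i j : ℕ, i < 4 ∧ j < 2^(p+3) ∧ g = (ka (p+4)) ^ i * (kb (p+4)) ^ j := by
  obtain ⟨s, t, rfl⟩ := nf_all p g
  have ha := zpow_reduce (ka (p+4)) 8 (by norm_num) (rel_a8 p) s
  have hb := zpow_reduce (kb (p+4)) (2^(p+3)) (by positivity) (rel_b2M p) t
  norm_num at ha
  set i8 := (s % 8).toNat with hi8
  set j0 := (t % ((2^(p+3) : ℕ) : ℤ)).toNat with hj0
  have hi8lt : i8 < 8 := by
    have h1 : (0:ℤ) ≤ s % 8 := Int.emod_nonneg s (by norm_num)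
    have h2 : s % 8 < 8 := Int.emod_lt_of_pos s (by norm_num)
    omega
  have hj0lt : j0 < 2^(p+3) := by
    have hMpos : (0:ℤ) < ((2^(p+3) : ℕ) : ℤ) := by positivity
    have h1 : (0:ℤ) ≤ t % ((2^(p+3) : ℕ) : ℤ) := Int.emod_nonneg t (by positivity)
    have h2 : t % ((2^(p+3):ℕ) : ℤ) < ((2^(p+3):ℕ) : ℤ) := Int.emod_lt_of_pos t hMpos
    omega
  rw [ha, hb]
  by_cases hc : i8 < 4
  · exact ⟨i8, j0, hc, hj0lt, rfl⟩
  · have hsplit : i8 = (i8 - 4) + 4 := by omega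
    refine ⟨i8 - 4, (2^(p+2) + j0) % 2^(p+3), by omega, Nat.mod_lt _ (by positivity), ?_⟩
    rw [hsplit, pow_add, ← pow_reduce (kb (p+4)) (rel_b2M p) (2^(p+2) + j0), pow_add,
      ← rel_b p, mul_assoc, show i8 - 4 + 4 - 4 = i8 - 4 by omega]
  
lemma KM_nf (w : KM p) : w = aK p ^ w.i.val * bK p ^ w.j.val := by
  rw [aK_pow, bK_pow, KM.mul_def]
  ext
  · simp [ZMod.natCast_val, ZMod.cast_id]
  · simp [ZMod.natCast_val, ZMod.cast_id]

lemma toKc_surj : Function.Surjective (toKc p) := by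
  intro x
  refine QuotientGroup.induction_on x ?_
  intro w
  refine ⟨(ka (p+4)) ^ w.i.val * (kb (p+4)) ^ w.j.val, ?_⟩
  rw [map_mul, map_pow, map_pow, toKc_a, toKc_b, ← map_pow, ← map_pow, ← map_mul,
    ← KM_nf]
  rfl

instance : Finite (KM p) :=
  Finite.of_surjective (fun x : ZMod 8 × ZMod (2^(p+3)) => (⟨x.1, x.2⟩ : KM p))
    (fun w => ⟨(w.i, w.j), rfl⟩)

/-- explicit equivalence with a product -/
def kmEquiv : KM p ≃ ZMod 8 × ZMod (2^(p+3)) :=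
  ⟨fun w => (w.i, w.j), fun x => ⟨x.1, x.2⟩, fun _ => rfl, fun _ => rfl⟩

lemma card_KM : Nat.card (KM p) = 2^(p+6) := by
  rw [Nat.card_congr (kmEquiv p), Nat.card_prod, Nat.card_zmod, Nat.card_zmod]
  ring

lemma card_Zs : Nat.card (Zs p) = 2 := by
  rw [Zs, Nat.card_zpowers]
  exact orderOf_eq_prime (by rw [pow_two]; exact zK_sq p) (zK_ne_one p)

lemma card_Kc : Nat.card (Kc p) = 2^(p+5) := by
  show Nat.card (KM p ⧸ Zs p) = 2^(p+5)
  have h := Subgroup.card_eq_card_quotient_mul_card_subgroup (Zs p)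
  rw [card_KM, card_Zs] at h
  have h2 : (2:ℕ)^(p+6) = 2^(p+5) * 2 := by ring
  omega

/-- surjection exhibiting finiteness of `K (p+4)` -/
def boundSurj : Fin 4 × Fin (2^(p+3)) → K (p+4) :=
  fun x => (ka (p+4)) ^ (x.1 : ℕ) * (kb (p+4)) ^ (x.2 : ℕ)

lemma boundSurj_surj : Function.Surjective (boundSurj p) := by
  intro g
  obtain ⟨i, j, hi, hj, rfl⟩ := bounded_form p g
  exact ⟨(⟨i, hi⟩, ⟨j, hj⟩), rfl⟩

instance : Finite (K (p+4)) := Finite.of_surjective _ (boundSurj_surj p)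

lemma cardK_le : Nat.card (K (p+4)) ≤ 2^(p+5) := by
  have h := Nat.card_le_card_of_surjective _ (boundSurj_surj p)
  have h4 : Nat.card (Fin 4) = 4 := by simp
  have hM : Nat.card (Fin (2^(p+3))) = 2^(p+3) := by simp
  rw [Nat.card_prod, h4, hM] at h
  have h2 : (2:ℕ)^(p+5) = 4 * 2^(p+3) := by ring
  omega

lemma toKc_bij : Function.Bijective (toKc p) := by
  have hsurj := toKc_surj p
  have hcard : Nat.card (K (p+4)) = Nat.card (Kc p) := by
    have h1 := cardK_le p
    have h2 : Nat.card (Kc p) ≤ Nat.card (K (p+4)) :=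
      Nat.card_le_card_of_surjective _ hsurj
    have h3 := card_Kc p
    omega
  exact (Nat.bijective_iff_surjective_and_card (toKc p)).mpr ⟨hsurj, hcard⟩

lemma toKc_inj : Function.Injective (toKc p) := (toKc_bij p).injective

end PG

section Invol
variable (p : ℕ)

lemma natlem1 {v : ℕ} (hv : v < 2^(p+3)) (h : 2^(p+3) ∣ v + v) : v = 0 ∨ v = 2^(p+2) := by
  obtain ⟨c, hc⟩ := h
  have h2 : (2:ℕ)^(p+3) = 2 * 2^(p+2) := by ring
  have hcb : c < 2 := by
    by_contra hcon
    push_neg at hcon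
    have h3 : 2^(p+3) * 2 ≤ 2^(p+3) * c := Nat.mul_le_mul_left _ hcon
    omega
  interval_cases c <;> omega

lemma natlem2 {v : ℕ} (hv : v < 2^(p+3)) (h : (v + v) % 2^(p+3) = 2^(p+2) % 2^(p+3)) :
    v = 2^(p+1) ∨ v = 2^(p+1) + 2^(p+2) := by
  have h2 : (2:ℕ)^(p+3) = 2 * 2^(p+2) := by ring
  have h1 : (2:ℕ)^(p+2) = 2 * 2^(p+1) := by ring
  have hmm : (2:ℕ)^(p+2) % 2^(p+3) = 2^(p+2) := Nat.mod_eq_of_lt (by omega)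
  rw [hmm] at h
  rcases Nat.lt_or_ge (v+v) (2^(p+3)) with hlt | hge
  · rw [Nat.mod_eq_of_lt hlt] at h
    omega
  · have hs : (v+v) % 2^(p+3) = v + v - 2^(p+3) := by
      rw [Nat.mod_eq_sub_mod hge, Nat.mod_eq_of_lt (by omega)]
    omega

lemma twoj_zero {j : ZMod (2^(p+3))} (h : j + j = 0) : j = 0 ∨ j = 2^(p+2) := by
  have hj : ((j.val : ℕ) : ZMod (2^(p+3))) = j := ZMod.natCast_rightInverse j
  rw [← hj, ← Nat.cast_add, ZMod.natCast_eq_zero_iff] at h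
  rcases natlem1 p (ZMod.val_lt j) h with h0 | h0
  · left; rw [← hj, h0]; simp
  · right; rw [← hj, h0, cast2pow]

lemma twoj_mm {j : ZMod (2^(p+3))} (h : j + j = 2^(p+2)) :
    j = 2^(p+1) ∨ j = 2^(p+1) + 2^(p+2) := by
  have hj : ((j.val : ℕ) : ZMod (2^(p+3))) = j := ZMod.natCast_rightInverse j
  rw [← hj, ← Nat.cast_add, ← cast2pow p (p+2), ZMod.natCast_eq_natCast_iff'] at h
  rcases natlem2 p (ZMod.val_lt j) h with h0 | h0
  · left; rw [← hj, h0, cast2pow]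
  · right; rw [← hj, h0, Nat.cast_add, cast2pow, cast2pow]

lemma dec1 : ∀ i : ZMod 8, i + i = 0 → i = 0 ∨ i = 4 := by decide
lemma dec2 : ∀ i : ZMod 8, i + i = 4 → i = 2 ∨ i = 6 := by decide

lemma kkmm_lt : 2^(p+1) + 2^(p+2) < 2^(p+3) := by
  have h2 : (2:ℕ)^(p+3) = 2 * 2^(p+2) := by ring
  have h1 : (2:ℕ)^(p+2) = 2 * 2^(p+1) := by ring
  have h0 : 0 < (2:ℕ)^(p+1) := by positivity
  omega

lemma kkmm_cast : ((2^(p+1) + 2^(p+2) : ℕ) : ZMod (2^(p+3))) = 2^(p+1) + 2^(p+2) := by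
  push_cast
  ring

lemma val_kkmm : ((2^(p+1) + 2^(p+2) : ZMod (2^(p+3)))).val = 2^(p+1) + 2^(p+2) := by
  rw [← kkmm_cast]
  exact ZMod.val_cast_of_lt (kkmm_lt p)

lemma ee_kk : ee p (2^(p+1)) = 1 := ee_2pow p (by omega) (by omega)

lemma ee_mm : ee p (2^(p+2)) = 1 := ee_2pow p (by omega) (by omega)

lemma ee_kkmm : ee p (2^(p+1) + 2^(p+2)) = 1 := by
  unfold ee
  rw [if_pos]
  rw [val_kkmm]
  have h1 : (2:ℕ)^(p+2) = 2 * 2^(p+1) := by ring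
  have h0 : (2:ℕ)^(p+1) = 2 * 2^p := by ring
  exact ⟨2^p + 2^(p+1), by omega⟩

lemma neg_mm : -(2^(p+2) : ZMod (2^(p+3))) = 2^(p+2) :=
  neg_eq_of_add_eq_zero_left (two_pow_p2_add_self p)

lemma two_pow_p1_add_self : (2^(p+1) : ZMod (2^(p+3))) + 2^(p+1) = 2^(p+2) := by ring

/-- the three involutions in the model -/
def E1 : Kc p := mkc p ⟨4, 0⟩
def E2 : Kc p := mkc p ⟨2, 2^(p+1)⟩
def E3 : Kc p := mkc p ⟨6, 2^(p+1)⟩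

lemma mk_eq_of_shift (w w' : KM p) (hcond : w⁻¹ * w' = zK p) : mkc p w = mkc p w' :=
  (mkc_eq_iff p w w').mpr (Or.inr hcond)

lemma invol_classify (h : Kc p) (hsq : h * h = 1) (hne : h ≠ 1) :
    h = E1 p ∨ h = E2 p ∨ h = E3 p := by
  revert hsq hne
  refine QuotientGroup.induction_on h ?_
  intro w hsq hne
  have hw : w * w = 1 ∨ w * w = zK p := by
    rw [← mkc_eq_one_iff p, map_mul]
    exact hsq
  by_cases heven : Even w.j.val
  · have hee : ee p w.j = 1 := by unfold ee; rw [if_pos heven]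
    rcases hw with hw | hw
    · have hi : w.i + w.i = 0 := by
        have := congrArg KM.i hw
        simpa [KM.mul_def, hee] using this
      have hj : w.j + w.j = 0 := congrArg KM.j hw
      rcases dec1 w.i hi with hi0 | hi0 <;> rcases twoj_zero p hj with hj0 | hj0
      · exact absurd ((mkc_eq_one_iff p w).mpr (Or.inl (KM.ext hi0 hj0))) hne
      · left
        have hw' : w = ⟨0, 2^(p+2)⟩ := KM.ext hi0 hj0
        rw [show (QuotientGroup.mk w : Kc p) = mkc p w from rfl, hw', E1]
        refine (mk_eq_of_shift p _ _ ?_).symm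
        rw [KM.inv_def, KM.mul_def, zK]
        refine KM.ext ?_ ?_
        · show -(ee p 0 * 4) + ee p (-0) * 0 = 4
          rw [neg_zero, ee_zero]
          decide
        · show -(0:ZMod (2^(p+3))) + 2^(p+2) = 2^(p+2)
          ring
      · left
        have hw' : w = ⟨4, 0⟩ := KM.ext hi0 hj0
        rw [show (QuotientGroup.mk w : Kc p) = mkc p w from rfl, hw', E1]
      · exact absurd ((mkc_eq_one_iff p w).mpr (Or.inr (KM.ext hi0 hj0))) hne
    · have hi : w.i + w.i = 4 := by
        have := congrArg KM.i hw
        simpa [KM.mul_def, hee, zK] using this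
      have hj : w.j + w.j = 2^(p+2) := by
        have := congrArg KM.j hw
        simpa [KM.mul_def, zK] using this
      rcases dec2 w.i hi with hi0 | hi0 <;> rcases twoj_mm p hj with hj0 | hj0
      · right; left
        have hw' : w = ⟨2, 2^(p+1)⟩ := KM.ext hi0 hj0
        rw [show (QuotientGroup.mk w : Kc p) = mkc p w from rfl, hw', E2]
      · right; right
        have hw' : w = ⟨2, 2^(p+1) + 2^(p+2)⟩ := KM.ext hi0 hj0
        rw [show (QuotientGroup.mk w : Kc p) = mkc p w from rfl, hw', E3]
        refine (mk_eq_of_shift p _ _ ?_).symm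
        rw [KM.inv_def, KM.mul_def, zK]
        refine KM.ext ?_ ?_
        · show -(ee p (2^(p+1)) * 6) + ee p (-(2^(p+1))) * 2 = 4
          rw [ee_neg, ee_kk]
          decide
        · show -(2^(p+1) : ZMod (2^(p+3))) + (2^(p+1) + 2^(p+2)) = 2^(p+2)
          ring
      · right; right
        have hw' : w = ⟨6, 2^(p+1)⟩ := KM.ext hi0 hj0
        rw [show (QuotientGroup.mk w : Kc p) = mkc p w from rfl, hw', E3]
      · right; left
        have hw' : w = ⟨6, 2^(p+1) + 2^(p+2)⟩ := KM.ext hi0 hj0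
        rw [show (QuotientGroup.mk w : Kc p) = mkc p w from rfl, hw', E2]
        refine (mk_eq_of_shift p _ _ ?_).symm
        rw [KM.inv_def, KM.mul_def, zK]
        refine KM.ext ?_ ?_
        · show -(ee p (2^(p+1)) * 2) + ee p (-(2^(p+1))) * 6 = 4
          rw [ee_neg, ee_kk]
          decide
        · show -(2^(p+1) : ZMod (2^(p+3))) + (2^(p+1) + 2^(p+2)) = 2^(p+2)
          ring
  · exfalso
    have hj : w.j + w.j = 0 ∨ w.j + w.j = 2^(p+2) := by
      rcases hw with hw | hw
      · exact Or.inl (congrArg KM.j hw)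
      · exact Or.inr (congrArg KM.j hw)
    rcases hj with hj | hj
    · rcases twoj_zero p hj with hj0 | hj0
      · rw [hj0] at heven
        exact heven (by simp)
      · rw [hj0] at heven
        refine heven ?_
        rw [val_2pow p (by omega)]
        exact ⟨2^(p+1), by ring⟩
    · rcases twoj_mm p hj with hj0 | hj0
      · rw [hj0] at heven
        refine heven ?_
        rw [val_2pow p (by omega)]
        exact ⟨2^p, by ring⟩
      · rw [hj0] at heven
        refine heven ?_
        rw [val_kkmm]
        have h1 : (2:ℕ)^(p+2) = 2 * 2^(p+1) := by ring
        have h0 : (2:ℕ)^(p+1) = 2 * 2^p := by ring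
        exact ⟨2^p + 2^(p+1), by omega⟩

lemma order_two_iff {G : Type*} [Group G] (g : G) : orderOf g = 2 ↔ g * g = 1 ∧ g ≠ 1 := by
  constructor
  · intro h
    refine ⟨?_, ?_⟩
    · have hpow := pow_orderOf_eq_one g
      rw [h, pow_two] at hpow
      exact hpow
    · rintro rfl
      rw [orderOf_one] at h
      norm_num at h
  · rintro ⟨h1, h2⟩
    exact orderOf_eq_prime (by rw [pow_two]; exact h1) h2

lemma E1_sq : E1 p * E1 p = 1 := by
  rw [E1, ← map_mul, mkc_eq_one_iff]
  left
  rw [KM.mul_def]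
  refine KM.ext ?_ ?_
  · show (4:ZMod 8) + ee p 0 * 4 = 0
    rw [ee_zero]
    decide
  · show (0:ZMod (2^(p+3))) + 0 = 0
    ring

lemma E2_sq : E2 p * E2 p = 1 := by
  rw [E2, ← map_mul, mkc_eq_one_iff]
  right
  rw [KM.mul_def, zK]
  refine KM.ext ?_ ?_
  · show (2:ZMod 8) + ee p (2^(p+1)) * 2 = 4
    rw [ee_kk]
    decide
  · show (2^(p+1):ZMod (2^(p+3))) + 2^(p+1) = 2^(p+2)
    ring

lemma E3_sq : E3 p * E3 p = 1 := by
  rw [E3, ← map_mul, mkc_eq_one_iff]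
  right
  rw [KM.mul_def, zK]
  refine KM.ext ?_ ?_
  · show (6:ZMod 8) + ee p (2^(p+1)) * 6 = 4
    rw [ee_kk]
    decide
  · show (2^(p+1):ZMod (2^(p+3))) + 2^(p+1) = 2^(p+2)
    ring

lemma E1_ne_one : E1 p ≠ 1 := by
  rw [E1, Ne, mkc_eq_one_iff]
  rintro (h | h)
  · have hi : (4 : ZMod 8) = 0 := congrArg KM.i h
    exact absurd hi (by decide)
  · have hj : (0 : ZMod (2^(p+3))) = 2^(p+2) := congrArg KM.j h
    exact two_pow_p2_ne_zero p hj.symm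

lemma E2_ne_one : E2 p ≠ 1 := by
  rw [E2, Ne, mkc_eq_one_iff]
  rintro (h | h)
  · have hi : (2 : ZMod 8) = 0 := congrArg KM.i h
    exact absurd hi (by decide)
  · have hi : (2 : ZMod 8) = 4 := congrArg KM.i h
    exact absurd hi (by decide)

lemma E3_ne_one : E3 p ≠ 1 := by
  rw [E3, Ne, mkc_eq_one_iff]
  rintro (h | h)
  · have hi : (6 : ZMod 8) = 0 := congrArg KM.i h
    exact absurd hi (by decide)
  · have hi : (6 : ZMod 8) = 4 := congrArg KM.i h
    exact absurd hi (by decide)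

lemma E1_ne_E2 : E1 p ≠ E2 p := by
  rw [E1, E2, Ne, mkc_eq_iff, KM.inv_def, KM.mul_def]
  rintro (h | h)
  · have hi : -(ee p 0 * 4) + ee p (-0) * 2 = (0:ZMod 8) := congrArg KM.i h
    rw [neg_zero, ee_zero] at hi
    exact absurd hi (by decide)
  · have hi : -(ee p 0 * 4) + ee p (-0) * 2 = (4:ZMod 8) := congrArg KM.i h
    rw [neg_zero, ee_zero] at hi
    exact absurd hi (by decide)

lemma E1_ne_E3 : E1 p ≠ E3 p := by
  rw [E1, E3, Ne, mkc_eq_iff, KM.inv_def, KM.mul_def]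
  rintro (h | h)
  · have hi : -(ee p 0 * 4) + ee p (-0) * 6 = (0:ZMod 8) := congrArg KM.i h
    rw [neg_zero, ee_zero] at hi
    exact absurd hi (by decide)
  · have hi : -(ee p 0 * 4) + ee p (-0) * 6 = (4:ZMod 8) := congrArg KM.i h
    rw [neg_zero, ee_zero] at hi
    exact absurd hi (by decide)

lemma E2_ne_E3 : E2 p ≠ E3 p := by
  rw [E2, E3, Ne, mkc_eq_iff, KM.inv_def, KM.mul_def]
  rintro (h | h)
  · have hi : -(ee p (2^(p+1)) * 2) + ee p (-(2^(p+1))) * 6 = (0:ZMod 8) :=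
      congrArg KM.i h
    rw [ee_neg, ee_kk] at hi
    exact absurd hi (by decide)
  · have hj : -(2^(p+1) : ZMod (2^(p+3))) + 2^(p+1) = 2^(p+2) := congrArg KM.j h
    rw [neg_add_cancel] at hj
    exact two_pow_p2_ne_zero p hj.symm

lemma invol_set_Kc : {h : Kc p | orderOf h = 2} = {E1 p, E2 p, E3 p} := by
  ext h
  simp only [Set.mem_setOf_eq, Set.mem_insert_iff, Set.mem_singleton_iff]
  rw [order_two_iff]
  constructor
  · rintro ⟨h1, h2⟩
    exact invol_classify p h h1 h2
  · rintro (rfl | rfl | rfl)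
    exacts [⟨E1_sq p, E1_ne_one p⟩, ⟨E2_sq p, E2_ne_one p⟩, ⟨E3_sq p, E3_ne_one p⟩]

lemma card_invol_Kc : Nat.card {h : Kc p | orderOf h = 2} = 3 := by
  rw [invol_set_Kc, Nat.card_coe_set_eq,
    Set.ncard_insert_of_notMem (by simp [E1_ne_E2 p, E1_ne_E3 p]),
    Set.ncard_pair (E2_ne_E3 p)]

end Invol

section Chi
variable (p : ℕ)

/-- reduction mod 2 -/
def c82 : ZMod 8 →+* ZMod 2 := ZMod.castHom (show (2:ℕ) ∣ 8 by norm_num) (ZMod 2)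

lemma c82_ee (j : ZMod (2^(p+3))) : c82 (ee p j) = 1 := by
  unfold ee
  split_ifs
  · exact map_one _
  · unfold abar
    split_ifs <;> decide

/-- parity character on the model -/
def chiKM : KM p →* Multiplicative (ZMod 2) where
  toFun w := Multiplicative.ofAdd (c82 w.i)
  map_one' := by
    show Multiplicative.ofAdd (c82 (0:ZMod 8)) = 1
    rw [map_zero]
    rfl
  map_mul' := by
    intro w w'
    show Multiplicative.ofAdd (c82 (w.i + ee p w.j * w'.i)) = _
    rw [map_add, map_mul, c82_ee, one_mul, ofAdd_add]

lemma chiKM_zK : chiKM p (zK p) = 1 := by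
  show Multiplicative.ofAdd (c82 (4:ZMod 8)) = 1
  decide

/-- parity character on the quotient model -/
def chiKc : Kc p →* Multiplicative (ZMod 2) :=
  QuotientGroup.lift (Zs p) (chiKM p) (by
    intro x hx
    rcases (mem_Zs_iff p x).mp hx with rfl | rfl
    · simp [MonoidHom.mem_ker]
    · rw [MonoidHom.mem_ker]
      exact chiKM_zK p)

lemma chiKc_mk (w : KM p) : chiKc p (mkc p w) = chiKM p w := rfl

/-- parity character on `K (p+4)` -/
def chi : K (p+4) →* Multiplicative (ZMod 2) := (chiKc p).comp (toKc p)

lemma chi_a : chi p (ka (p+4)) = Multiplicative.ofAdd 1 := by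
  show chiKc p (toKc p (ka (p+4))) = _
  rw [toKc_a]
  show Multiplicative.ofAdd (c82 (1:ZMod 8)) = _
  decide

lemma chi_b : chi p (kb (p+4)) = 1 := by
  show chiKc p (toKc p (kb (p+4))) = _
  rw [toKc_b]
  show Multiplicative.ofAdd (c82 (0:ZMod 8)) = _
  decide

/-- the subgroup `Q` -/
def Qsub : Subgroup (K (p+4)) :=
  Subgroup.closure {kb (p+4), ka (p+4)^2 * kb (p+4)^(2^(p+1))}

lemma chi_gen2 : chi p (ka (p+4)^2 * kb (p+4)^(2^(p+1))) = 1 := by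
  rw [map_mul, map_pow, map_pow, chi_a, chi_b, one_pow, mul_one]
  decide

lemma Q_le_ker : Qsub p ≤ (chi p).ker := by
  rw [Qsub, Subgroup.closure_le]
  intro g hg
  rcases hg with rfl | hg
  · rw [SetLike.mem_coe, MonoidHom.mem_ker]
    exact chi_b p
  · rw [Set.mem_singleton_iff] at hg
    subst hg
    rw [SetLike.mem_coe, MonoidHom.mem_ker]
    exact chi_gen2 p

lemma dec3 : ∀ i : ZMod 8, c82 i = 0 →
    (i = ((2*0:ℕ):ZMod 8) ∨ i = ((2*1:ℕ):ZMod 8) ∨ i = ((2*2:ℕ):ZMod 8) ∨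
      i = ((2*3:ℕ):ZMod 8)) := by decide

lemma ka_sq_mem_Q : ka (p+4)^2 ∈ Qsub p := by
  have h : ka (p+4)^2 = (ka (p+4)^2 * kb (p+4)^(2^(p+1))) * (kb (p+4)^(2^(p+1)))⁻¹ := by
    group
  rw [h]
  refine Subgroup.mul_mem _ ?_ ?_
  · exact Subgroup.subset_closure (Set.mem_insert_of_mem _ rfl)
  · exact Subgroup.inv_mem _ (Subgroup.pow_mem _
      (Subgroup.subset_closure (Set.mem_insert _ _)) _)

lemma kb_mem_Q : kb (p+4) ∈ Qsub p :=
  Subgroup.subset_closure (Set.mem_insert _ _)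

lemma ker_le_Q : (chi p).ker ≤ Qsub p := by
  intro g hg
  rw [MonoidHom.mem_ker] at hg
  obtain ⟨w, hw⟩ := QuotientGroup.mk'_surjective (Zs p) (toKc p g)
  have hker : chiKM p w = 1 := by
    rw [← chiKc_mk]
    show chiKc p (QuotientGroup.mk' (Zs p) w) = 1
    rw [hw]
    exact hg
  have hi0 : c82 w.i = 0 := by
    have := hker
    rw [show chiKM p w = Multiplicative.ofAdd (c82 w.i) from rfl, ofAdd_eq_one] at this
    exact this
  have hu : ∃ u : ℕ, w.i = ((2*u:ℕ):ZMod 8) := by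
    rcases dec3 w.i hi0 with h|h|h|h
    exacts [⟨0, h⟩, ⟨1, h⟩, ⟨2, h⟩, ⟨3, h⟩]
  obtain ⟨u, hu⟩ := hu
  have key : g = (ka (p+4)^2)^u * kb (p+4)^(w.j.val) := by
    apply toKc_inj p
    rw [map_mul, map_pow, map_pow, map_pow, toKc_a, toKc_b, ← map_pow, ← map_pow,
      ← map_pow, ← map_mul, ← pow_mul]
    have : aK p ^ (2*u) * bK p ^ (w.j.val) = w := by
      rw [aK_pow, bK_pow, KM.mul_def]
      refine (KM.ext ?_ ?_).symm
      · show w.i = ((2*u : ℕ) : ZMod 8) + ee p 0 * 0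
        rw [ee_zero, mul_zero, add_zero, hu]
      · show w.j = 0 + ((w.j.val : ℕ) : ZMod (2^(p+3)))
        rw [zero_add, ZMod.natCast_rightInverse w.j]
    rw [this]
    show toKc p g = mkc p w
    rw [← hw]
    rfl
  rw [key]
  exact Subgroup.mul_mem _ (Subgroup.pow_mem _ (ka_sq_mem_Q p) _)
    (Subgroup.pow_mem _ (kb_mem_Q p) _)

lemma Q_eq_ker : Qsub p = (chi p).ker := le_antisymm (Q_le_ker p) (ker_le_Q p)

lemma chi_surj : Function.Surjective (chi p) := by
  intro c
  have hc : ∀ d : Multiplicative (ZMod 2), d = 1 ∨ d = Multiplicative.ofAdd 1 := by decide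
  rcases hc c with rfl | rfl
  · exact ⟨1, map_one _⟩
  · exact ⟨ka (p+4), chi_a p⟩

lemma card_mult_zmod2 : Nat.card (Multiplicative (ZMod 2)) = 2 := by
  rw [Nat.card_eq_fintype_card]
  rfl

lemma Q_index : (Qsub p).index = 2 := by
  rw [Q_eq_ker, Subgroup.index_ker, MonoidHom.range_eq_top.mpr (chi_surj p),
    Subgroup.card_top, card_mult_zmod2]

end Chi

section Count
variable (p : ℕ)

lemma orderOf_toKc (g : K (p+4)) : orderOf (toKc p g) = orderOf g :=
  orderOf_injective (toKc p) (toKc_inj p) g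

lemma card_invol_K : Nat.card {g : K (p+4) | orderOf g = 2} = 3 := by
  have e : {g : K (p+4) | orderOf g = 2} ≃ {h : Kc p | orderOf h = 2} :=
    (Equiv.ofBijective (toKc p) (toKc_bij p)).subtypeEquiv (fun g => by
      simp only [Set.mem_setOf_eq]
      rw [show (Equiv.ofBijective (toKc p) (toKc_bij p)) g = toKc p g from rfl,
        orderOf_toKc])
  rw [Nat.card_congr e, card_invol_Kc]

lemma invol_mem_Q (g : K (p+4)) (hg : orderOf g = 2) : g ∈ Qsub p := by
  have h2 : orderOf (toKc p g) = 2 := by rw [orderOf_toKc]; exact hg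
  obtain ⟨hsq, hne⟩ := (order_two_iff _).mp h2
  have hcls := invol_classify p _ hsq hne
  refine ker_le_Q p ?_
  rw [MonoidHom.mem_ker]
  show chiKc p (toKc p g) = 1
  rcases hcls with h|h|h <;> rw [h]
  · show Multiplicative.ofAdd (c82 (4:ZMod 8)) = 1
    decide
  · show Multiplicative.ofAdd (c82 (2:ZMod 8)) = 1
    decide
  · show Multiplicative.ofAdd (c82 (6:ZMod 8)) = 1
    decide

lemma card_invol_Q : Nat.card {g : K (p+4) | orderOf g = 2 ∧ g ∈ Qsub p} = 3 := by
  have hset : {g : K (p+4) | orderOf g = 2 ∧ g ∈ Qsub p} =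
      {g : K (p+4) | orderOf g = 2} := by
    ext g
    simp only [Set.mem_setOf_eq]
    exact ⟨fun h => h.1, fun h => ⟨h, invol_mem_Q p g h⟩⟩
  rw [hset, card_invol_K]

end Count

section QAside
variable (p : ℕ)

lemma w2k : aK p ^ 2 * bK p ^ (2^(p+1)) = (⟨2, 2^(p+1)⟩ : KM p) := by
  rw [aK_pow, bK_pow, KM.mul_def]
  refine KM.ext ?_ ?_
  · show ((2:ℕ):ZMod 8) + ee p 0 * 0 = 2
    rw [ee_zero]
    push_cast
    ring
  · show (0:ZMod (2^(p+3))) + ((2^(p+1):ℕ) : ZMod (2^(p+3))) = 2^(p+1)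
    rw [cast2pow]
    ring

lemma toKc_gen2 : toKc p (ka (p+4)^2 * kb (p+4)^(2^(p+1))) =
    mkc p ⟨2, 2^(p+1)⟩ := by
  rw [map_mul, map_pow, map_pow, toKc_a, toKc_b, ← map_pow, ← map_pow, ← map_mul, w2k]

lemma gen2_invol : (ka (p+4)^2 * kb (p+4)^(2^(p+1)))^2 = 1 := by
  apply toKc_inj p
  rw [map_pow, toKc_gen2, map_one, pow_two]
  exact E2_sq p

lemma ee_kk1 : ee p (2^(p+1) + 1) = abar p := by
  have hlt : 2^(p+1) + 1 < 2^(p+3) := by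
    have h2 : (2:ℕ)^(p+3) = 2 * 2^(p+2) := by ring
    have h1 : (2:ℕ)^(p+2) = 2 * 2^(p+1) := by ring
    have h0 : 0 < (2:ℕ)^(p+1) := by positivity
    omega
  have hcast : ((2^(p+1) + 1 : ℕ) : ZMod (2^(p+3))) = 2^(p+1) + 1 := by
    push_cast
    ring
  unfold ee
  rw [if_neg]
  rw [← hcast, ZMod.val_cast_of_lt hlt]
  have h0 : ((2:ℕ)^(p+1)) % 2 = 0 := by
    have : (2:ℕ)^(p+1) = 2 * 2^p := by ring
    omega
  rw [Nat.even_iff]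
  omega

lemma model_conj : (⟨2, 2^(p+1)⟩ : KM p) * bK p * (⟨2, 2^(p+1)⟩ : KM p)⁻¹ *
    (bK p ^ (2^(p+2)+1))⁻¹ = zK p := by
  have hw_inv : (⟨2, 2^(p+1)⟩ : KM p)⁻¹ = ⟨6, -(2^(p+1))⟩ := by
    rw [KM.inv_def]
    refine KM.ext ?_ ?_
    · show -(ee p (2^(p+1)) * 2) = 6
      rw [ee_kk]
      decide
    · rfl
  have h1 : (⟨2, 2^(p+1)⟩ : KM p) * bK p = ⟨2, 2^(p+1)+1⟩ := by
    rw [bK, KM.mul_def]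
    refine KM.ext ?_ ?_
    · show 2 + ee p (2^(p+1)) * 0 = 2
      rw [mul_zero, add_zero]
    · rfl
  have h2 : (⟨2, 2^(p+1)+1⟩ : KM p) * ⟨6, -(2^(p+1))⟩ = ⟨4, 1⟩ := by
    rw [KM.mul_def]
    refine KM.ext ?_ ?_
    · show 2 + ee p (2^(p+1)+1) * 6 = 4
      rw [ee_kk1]
      unfold abar
      split_ifs <;> decide
    · show 2^(p+1)+1 + -(2^(p+1)) = (1 : ZMod (2^(p+3)))
      ring
  have h3 : (bK p ^ (2^(p+2)+1))⁻¹ = (⟨0, -(2^(p+2)+1)⟩ : KM p) := by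
    rw [bK_pow, KM.inv_def]
    refine KM.ext ?_ ?_
    · show -(ee p _ * 0) = 0
      rw [mul_zero, neg_zero]
    · show -(((2^(p+2)+1 : ℕ)) : ZMod (2^(p+3))) = -(2^(p+2)+1)
      push_cast
      ring
  have h4 : (⟨4, 1⟩ : KM p) * ⟨0, -(2^(p+2)+1)⟩ = zK p := by
    rw [KM.mul_def, zK]
    refine KM.ext ?_ ?_
    · show 4 + ee p 1 * 0 = 4
      rw [mul_zero, add_zero]
    · show (1 : ZMod (2^(p+3))) + -(2^(p+2)+1) = 2^(p+2)
      rw [show (1 : ZMod (2^(p+3))) + -(2^(p+2)+1) = -(2^(p+2)) by ring, neg_mm]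
  rw [h1, hw_inv, h2, h3, h4]

/-- generator images for the map `QA → K` -/
def fq : Bool → K (p+4)
  | true => kb (p+4)
  | false => ka (p+4)^2 * kb (p+4)^(2^(p+1))

lemma theta_rels : ∀ r ∈ qaRels (p+4), FreeGroup.lift (fq p) r = 1 := by
  intro r hr
  have h1 : (p+4)-1 = p+3 := by omega
  have h2 : (p+4)-2 = p+2 := by omega
  simp only [qaRels, h1, h2, Set.mem_insert_iff, Set.mem_singleton_iff] at hr
  rcases hr with rfl | rfl | rfl
  · rw [map_pow, FreeGroup.lift_apply_of]
    exact rel_b2M p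
  · rw [map_pow, FreeGroup.lift_apply_of]
    show (ka (p+4)^2 * kb (p+4)^(2^(p+1)))^2 = 1
    exact gen2_invol p
  · simp only [map_mul, map_inv, map_pow, FreeGroup.lift_apply_of]
    show (ka (p+4)^2 * kb (p+4)^(2^(p+1))) * kb (p+4) *
      (ka (p+4)^2 * kb (p+4)^(2^(p+1)))⁻¹ * (kb (p+4) ^ (2^(p+2)+1))⁻¹ = 1
    apply toKc_inj p
    simp only [map_mul, map_inv, map_pow, toKc_a, toKc_b]
    simp only [← map_pow, ← map_inv, ← map_mul]
    rw [map_one, mkc_eq_one_iff]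
    right
    rw [w2k]
    exact model_conj p

/-- the homomorphism `QA (p+4) → K (p+4)` -/
def theta : QA (p+4) →* K (p+4) := PresentedGroup.toGroup (theta_rels p)

lemma theta_x : theta p (qx (p+4)) = kb (p+4) := PresentedGroup.toGroup.of _
lemma theta_y : theta p (qy (p+4)) = ka (p+4)^2 * kb (p+4)^(2^(p+1)) :=
  PresentedGroup.toGroup.of _

lemma range_theta : (theta p).range = Qsub p := by
  rw [MonoidHom.range_eq_map, ← PresentedGroup.closure_range_of (qaRels (p+4))]
  have hset : (Set.range (PresentedGroup.of : Bool → QA (p+4))) =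
      {qx (p+4), qy (p+4)} := by
    ext g
    simp only [Set.mem_range, Set.mem_insert_iff, Set.mem_singleton_iff]
    constructor
    · rintro ⟨b, rfl⟩
      cases b
      · exact Or.inr rfl
      · exact Or.inl rfl
    · rintro (rfl | rfl)
      exacts [⟨true, rfl⟩, ⟨false, rfl⟩]
  rw [hset, MonoidHom.map_closure, Qsub]
  congr 1
  rw [Set.image_insert_eq, Set.image_singleton, theta_x, theta_y]

lemma qr_one {r : FreeGroup Bool} (hr : r ∈ qaRels (p+4)) :
    PresentedGroup.mk (qaRels (p+4)) r = 1 :=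
  (QuotientGroup.eq_one_iff r).mpr (Subgroup.subset_normalClosure hr)

lemma rel_qx : (qx (p+4))^(2^(p+3)) = 1 := by
  have hm : FreeGroup.of true ^ 2^((p+4)-1) ∈ qaRels (p+4) := Set.mem_insert _ _
  have h1 : (p+4)-1 = p+3 := by omega
  rw [h1] at hm
  have := qr_one p hm
  rw [map_pow] at this
  exact this

lemma rel_qy : (qy (p+4))^2 = 1 := by
  have hm : FreeGroup.of false ^ 2 ∈ qaRels (p+4) :=
    Set.mem_insert_of_mem _ (Set.mem_insert _ _)
  have := qr_one p hm
  rw [map_pow] at this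
  exact this

lemma rel_qc : qy (p+4) * qx (p+4) * (qy (p+4))⁻¹ = (qx (p+4))^(2^(p+2)+1) := by
  have hm : FreeGroup.of false * FreeGroup.of true * (FreeGroup.of false)⁻¹ *
      (FreeGroup.of true ^ (2^((p+4)-2)+1))⁻¹ ∈ qaRels (p+4) :=
    Set.mem_insert_of_mem _ (Set.mem_insert_of_mem _ rfl)
  have h2 : (p+4)-2 = p+2 := by omega
  rw [h2] at hm
  have := qr_one p hm
  rw [map_mul, map_mul, map_mul, map_inv, map_inv, map_pow] at this
  exact mul_inv_eq_one.mp this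

lemma qy_inv : (qy (p+4))⁻¹ = qy (p+4) := by
  have h := rel_qy p
  rw [pow_two] at h
  exact inv_eq_of_mul_eq_one_left h

lemma qy_conj_zpow (s : ℤ) : qy (p+4) * (qx (p+4))^s * (qy (p+4))⁻¹ =
    (qx (p+4))^(((2^(p+2)+1 : ℕ) : ℤ) * s) := by
  rw [conj_zpow', rel_qc, ← zpow_natCast, ← zpow_mul]

lemma qyy : qy (p+4) * qy (p+4) = 1 := by
  rw [← pow_two]
  exact rel_qy p

/-- normal-form subgroup of `QA` -/
def NFQ : Subgroup (QA (p+4)) where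
  carrier := {g | ∃ (s : ℤ) (c : Bool), g = (qx (p+4))^s * (qy (p+4))^(cond c 1 0)}
  one_mem' := ⟨0, false, by simp⟩
  mul_mem' := by
    rintro g g' ⟨s, c, rfl⟩ ⟨s', c', rfl⟩
    cases c
    · refine ⟨s + s', c', ?_⟩
      simp only [cond, pow_zero, mul_one]
      rw [zpow_add, mul_assoc]
    · have hc := qy_conj_zpow p s'
      cases c'
      · refine ⟨s + ((2^(p+2)+1 : ℕ) : ℤ) * s', true, ?_⟩
        simp only [cond, pow_one, pow_zero, mul_one]
        rw [zpow_add, ← hc]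
        group
      · refine ⟨s + ((2^(p+2)+1 : ℕ) : ℤ) * s', false, ?_⟩
        simp only [cond, pow_one, pow_zero, mul_one]
        rw [zpow_add, ← hc]
        rw [show qx (p+4)^s * qy (p+4) * (qx (p+4)^s' * qy (p+4)) =
          qx (p+4)^s * (qy (p+4) * qx (p+4)^s' * (qy (p+4))⁻¹) *
            (qy (p+4) * qy (p+4)) by group, qyy, mul_one]
  inv_mem' := by
    rintro g ⟨s, c, rfl⟩
    cases c
    · refine ⟨-s, false, ?_⟩
      simp only [cond, pow_zero, mul_one]
      rw [zpow_neg]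
    · refine ⟨((2^(p+2)+1 : ℕ) : ℤ) * (-s), true, ?_⟩
      simp only [cond, pow_one]
      have hc := qy_conj_zpow p (-s)
      rw [mul_inv_rev, qy_inv, ← hc]
      group

lemma nfq_all (g : QA (p+4)) :
    ∃ (s : ℤ) (c : Bool), g = (qx (p+4))^s * (qy (p+4))^(cond c 1 0) := by
  refine PresentedGroup.generated_by _ (NFQ p) ?_ g
  intro j
  cases j
  · exact ⟨0, true, by simp [qy]⟩
  · exact ⟨1, false, by simp [qx]⟩

lemma qa_bounded (g : QA (p+4)) : ∃ (j : ℕ) (c : Bool), j < 2^(p+3) ∧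
    g = (qx (p+4))^j * (qy (p+4))^(cond c 1 0) := by
  obtain ⟨s, c, rfl⟩ := nfq_all p g
  have hx := zpow_reduce (qx (p+4)) (2^(p+3)) (by positivity) (rel_qx p) s
  refine ⟨(s % ((2^(p+3):ℕ):ℤ)).toNat, c, ?_, by rw [hx]⟩
  have hMpos : (0:ℤ) < ((2^(p+3) : ℕ) : ℤ) := by positivity
  have hn1 : (0:ℤ) ≤ s % ((2^(p+3) : ℕ):ℤ) := Int.emod_nonneg s (by positivity)
  have hn2 : s % ((2^(p+3):ℕ):ℤ) < ((2^(p+3):ℕ):ℤ) := Int.emod_lt_of_pos s hMpos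
  omega

/-- surjection exhibiting finiteness of `QA (p+4)` -/
def qaSurj : Fin (2^(p+3)) × Bool → QA (p+4) :=
  fun x => (qx (p+4))^(x.1 : ℕ) * (qy (p+4))^(cond x.2 1 0)

lemma qaSurj_surj : Function.Surjective (qaSurj p) := by
  intro g
  obtain ⟨j, c, hj, rfl⟩ := qa_bounded p g
  exact ⟨(⟨j, hj⟩, c), rfl⟩

instance : Finite (QA (p+4)) := Finite.of_surjective _ (qaSurj_surj p)

lemma card_QA_le : Nat.card (QA (p+4)) ≤ 2^(p+4) := by
  have h := Nat.card_le_card_of_surjective _ (qaSurj_surj p)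
  have h4 : Nat.card (Fin (2^(p+3))) = 2^(p+3) := by simp
  have hB : Nat.card Bool = 2 := by simp
  rw [Nat.card_prod, h4, hB] at h
  have h2 : (2:ℕ)^(p+4) = 2^(p+3) * 2 := by ring
  omega

lemma card_K : Nat.card (K (p+4)) = 2^(p+5) := by
  rw [Nat.card_congr (Equiv.ofBijective (toKc p) (toKc_bij p)), card_Kc]

lemma card_Q : Nat.card (Qsub p) = 2^(p+4) := by
  have h := Subgroup.card_mul_index (Qsub p)
  rw [Q_index, card_K] at h
  have h2 : (2:ℕ)^(p+5) = 2^(p+4) * 2 := by ring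
  omega

lemma iso_exists : Nonempty ((Qsub p) ≃* QA (p+4)) := by
  have hsurj := MonoidHom.rangeRestrict_surjective (theta p)
  have hcard : Nat.card (QA (p+4)) = Nat.card ((theta p).range) := by
    have hle := card_QA_le p
    have hge : Nat.card ((theta p).range) ≤ Nat.card (QA (p+4)) :=
      Nat.card_le_card_of_surjective _ hsurj
    have hr : Nat.card ((theta p).range) = 2^(p+4) := by
      rw [range_theta]
      exact card_Q p
    omega
  have hbij : Function.Bijective ((theta p).rangeRestrict) :=
    (Nat.bijective_iff_surjective_and_card _).mpr ⟨hsurj, hcard⟩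
  exact ⟨(MulEquiv.subgroupCongr (range_theta p)).symm.trans
    (MulEquiv.ofBijective _ hbij).symm⟩

end QAside
end Stmt17

/-- For `n ≥ 4`, the subgroup `Q = ⟨b, a² b^(2^(n-3))⟩` of `K_n` has index two and is
isomorphic to the quasi-abelian group `QA_n`; moreover `K_n` and `Q` each contain
exactly three involutions. -/
theorem stmt17 (n : ℕ) (hn : 4 ≤ n) :
    (Subgroup.closure {kb n, ka n ^ 2 * kb n ^ 2 ^ (n - 3)} : Subgroup (K n)).index = 2 ∧
    Nonempty ((Subgroup.closure {kb n, ka n ^ 2 * kb n ^ 2 ^ (n - 3)} : Subgroup (K n)) ≃*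
      QA n) ∧
    Nat.card {g : K n | orderOf g = 2} = 3 ∧
    Nat.card {g : K n | orderOf g = 2 ∧
      g ∈ Subgroup.closure {kb n, ka n ^ 2 * kb n ^ 2 ^ (n - 3)}} = 3 := by
  obtain ⟨p, rfl⟩ : ∃ p, n = p + 4 := ⟨n - 4, by omega⟩
  simp only [show p+4-3 = p+1 from by omega]
  exact ⟨Stmt17.Q_index p, Stmt17.iso_exists p, Stmt17.card_invol_K p, Stmt17.card_invol_Q p⟩
end

section
/- Let n ≥ 5. In the group K_n, the subgroup K_n^+ = ⟨b^{-2}, a⟩ is an abelian subgroup of index two isomorphic to C_{2^{n-2}} × C_4, and K_n^+ contains exactly three involutions. -/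
namespace St18

/-- reduce a power modulo an identity `w ^ m = 1`. -/
lemma pow_mod_one {G : Type*} [Group G] {w : G} {m : ℕ} (hw : w ^ m = 1) (k : ℕ) :
    w ^ (k % m) = w ^ k := by
  conv_rhs => rw [← Nat.mod_add_div k m]
  rw [pow_add, pow_mul, hw, one_pow, mul_one]

variable (n : ℕ)

lemma mk_rel {r : FreeGroup Bool} (hr : r ∈ kRels n) :
    PresentedGroup.mk (kRels n) r = 1 :=
  (QuotientGroup.eq_one_iff r).2 (Subgroup.subset_normalClosure hr)

lemma ra8 : (ka n) ^ 8 = 1 := by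
  have := mk_rel n (show FreeGroup.of true ^ 8 ∈ kRels n by left; rfl)
  simpa [ka, PresentedGroup.of, map_pow] using this

lemma rb : (kb n) ^ 2 ^ (n - 2) = (ka n) ^ 4 := by
  have := mk_rel n (show FreeGroup.of false ^ 2 ^ (n-2) * (FreeGroup.of true ^ 4)⁻¹ ∈ kRels n by
    right; left; rfl)
  rw [map_mul, map_inv, map_pow, map_pow] at this
  exact mul_inv_eq_one.1 this

lemma rc : kb n * ka n * (kb n)⁻¹ = (ka n) ^ (kAlpha n) := by
  have := mk_rel n (show FreeGroup.of false * FreeGroup.of true * (FreeGroup.of false)⁻¹ *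
      (FreeGroup.of true ^ kAlpha n)⁻¹ ∈ kRels n by right; right; rfl)
  rw [map_mul, map_inv, map_mul, map_mul, map_inv, map_zpow] at this
  exact mul_inv_eq_one.1 this

lemma ka_alpha_sq : (ka n) ^ (kAlpha n * kAlpha n) = ka n := by
  unfold kAlpha
  split
  · norm_num
  · have h9 : (3 * 3 : ℤ) = 8 + 1 := by norm_num
    rw [h9, zpow_add, zpow_one, show ((8:ℤ) = (8:ℕ)) from rfl, zpow_natCast, ra8, one_mul]

lemma rconj : (kb n)⁻¹ * ka n * kb n = (ka n) ^ (kAlpha n) := by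
  have h1 : kb n * (ka n) ^ (kAlpha n) * (kb n)⁻¹ = ka n := by
    rw [← conj_zpow, rc, ← zpow_mul, ka_alpha_sq]
  have := congrArg (fun w => (kb n)⁻¹ * w * kb n) h1
  simpa [mul_assoc] using this.symm

lemma comm_ba : ((kb n)⁻¹)^2 * ka n = ka n * ((kb n)⁻¹)^2 := by
  have h1 : (kb n)⁻¹ * ka n = (ka n) ^ (kAlpha n) * (kb n)⁻¹ := by
    have := rconj n
    rw [mul_assoc] at this
    calc (kb n)⁻¹ * ka n = ((kb n)⁻¹ * (ka n * kb n)) * (kb n)⁻¹ := by group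
    _ = (ka n) ^ (kAlpha n) * (kb n)⁻¹ := by rw [this]
  have h2 : (kb n)⁻¹ * (ka n) ^ (kAlpha n) = ka n * (kb n)⁻¹ := by
    rw [← rc]; group
  calc ((kb n)⁻¹)^2 * ka n = (kb n)⁻¹ * ((kb n)⁻¹ * ka n) := by rw [pow_two, mul_assoc]
  _ = ((kb n)⁻¹ * (ka n) ^ (kAlpha n)) * (kb n)⁻¹ := by rw [h1, mul_assoc]
  _ = ka n * ((kb n)⁻¹)^2 := by rw [h2, mul_assoc, ← pow_two]

/-! ### The concrete model group: a quotient of `ZMod 8 ⋊ ZMod (2^(n-1))` -/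

lemma alpha_sq_mod8 : ((kAlpha n : ZMod 8)) * (kAlpha n : ZMod 8) = 1 := by
  unfold kAlpha; split <;> push_cast <;> decide

lemma alpha_four : ((kAlpha n : ZMod 8)) * 4 = 4 := by
  unfold kAlpha; split <;> push_cast <;> decide

/-- the automorphism `x ↦ α • x` of `ZMod 8`, multiplicatively. -/
def tau : MulAut (Multiplicative (ZMod 8)) :=
  AddEquiv.toMultiplicative
    { toFun := fun x => (kAlpha n : ZMod 8) * x
      invFun := fun x => (kAlpha n : ZMod 8) * x
      left_inv := fun x => by
        show (kAlpha n : ZMod 8) * ((kAlpha n : ZMod 8) * x) = x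
        rw [← mul_assoc, alpha_sq_mod8, one_mul]
      right_inv := fun x => by
        show (kAlpha n : ZMod 8) * ((kAlpha n : ZMod 8) * x) = x
        rw [← mul_assoc, alpha_sq_mod8, one_mul]
      map_add' := fun x y => mul_add _ x y }

lemma tau_apply (x : ZMod 8) :
    tau n (Multiplicative.ofAdd x) = Multiplicative.ofAdd ((kAlpha n : ZMod 8) * x) := rfl

lemma tau_sq : tau n ^ 2 = 1 := by
  rw [pow_two]
  apply MulEquiv.ext
  intro x
  show tau n (tau n x) = x
  rw [show x = Multiplicative.ofAdd (Multiplicative.toAdd x) from rfl, tau_apply, tau_apply,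
    ← mul_assoc, alpha_sq_mod8, one_mul]

lemma tau_pow_fix4 (k : ℕ) :
    (tau n ^ k) (Multiplicative.ofAdd (4 : ZMod 8)) = Multiplicative.ofAdd 4 := by
  induction k with
  | zero => rfl
  | succ k ih =>
    rw [pow_succ, MulAut.mul_apply, tau_apply, alpha_four, ih]

instance : NeZero (2 ^ (n - 2 + 1)) := ⟨pow_ne_zero _ (by norm_num)⟩
instance : NeZero (2 ^ (n - 2)) := ⟨pow_ne_zero _ (by norm_num)⟩
instance : NeZero (2 ^ (n - 3)) := ⟨pow_ne_zero _ (by norm_num)⟩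

/-- reduction to `ZMod 2`, multiplicatively. -/
def toTwoHom : Multiplicative (ZMod (2 ^ (n - 2 + 1))) →* Multiplicative (ZMod 2) :=
  AddMonoidHom.toMultiplicative
    (ZMod.castHom (⟨2 ^ (n - 2), by ring⟩ : (2:ℕ) ∣ 2 ^ (n - 2 + 1)) (ZMod 2)).toAddMonoidHom

lemma toTwoHom_apply (x : ZMod (2 ^ (n - 2 + 1))) :
    toTwoHom n (Multiplicative.ofAdd x) =
      Multiplicative.ofAdd (ZMod.castHom (⟨2 ^ (n - 2), by ring⟩ : (2:ℕ) ∣ 2 ^ (n - 2 + 1))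
        (ZMod 2) x) := rfl

/-- the action of `ZMod (2^(n-1))` on `ZMod 8` by `α ^ j`. -/
def phi : Multiplicative (ZMod (2 ^ (n - 2 + 1))) →* MulAut (Multiplicative (ZMod 8)) :=
  MonoidHom.mk' (fun j => tau n ^ (Multiplicative.toAdd (toTwoHom n j)).val)
    (by
      intro i j
      show tau n ^ (Multiplicative.toAdd (toTwoHom n (i * j))).val =
        tau n ^ (Multiplicative.toAdd (toTwoHom n i)).val *
          tau n ^ (Multiplicative.toAdd (toTwoHom n j)).val
      rw [map_mul]
      show tau n ^ ((Multiplicative.toAdd (toTwoHom n i)) +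
          (Multiplicative.toAdd (toTwoHom n j))).val = _
      rw [ZMod.val_add, pow_mod_one (tau_sq n), pow_add])

lemma phi_two (v : ZMod (2 ^ (n - 2 + 1))) : phi n (Multiplicative.ofAdd (2 * v)) = 1 := by
  have h : toTwoHom n (Multiplicative.ofAdd (2 * v)) = Multiplicative.ofAdd (0 : ZMod 2) := by
    rw [toTwoHom_apply, map_mul, map_ofNat, show ((2 : ZMod 2)) = 0 from by decide, zero_mul]
  show tau n ^ (Multiplicative.toAdd (toTwoHom n (Multiplicative.ofAdd (2*v)))).val = 1
  rw [h]
  rfl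

lemma phi_one_eq_tau : phi n (Multiplicative.ofAdd (1 : ZMod (2 ^ (n - 2 + 1)))) = tau n := by
  have h : toTwoHom n (Multiplicative.ofAdd (1 : ZMod (2 ^ (n - 2 + 1)))) =
      Multiplicative.ofAdd (1 : ZMod 2) := by
    rw [toTwoHom_apply, map_one]
  show tau n ^ (Multiplicative.toAdd (toTwoHom n (Multiplicative.ofAdd
    (1 : ZMod (2 ^ (n - 2 + 1)))))).val = tau n
  rw [h]
  show tau n ^ (1 : ZMod 2).val = tau n
  rw [show (1 : ZMod 2).val = 1 from rfl, pow_one]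

lemma phi_fix4 (j : Multiplicative (ZMod (2 ^ (n - 2 + 1)))) :
    phi n j (Multiplicative.ofAdd (4 : ZMod 8)) = Multiplicative.ofAdd 4 :=
  tau_pow_fix4 n _

/-- the model group before taking the quotient. -/
abbrev Hgrp := Multiplicative (ZMod 8) ⋊[phi n] Multiplicative (ZMod (2 ^ (n - 2 + 1)))

/-- parametrization of an abelian subgroup of `Hgrp`. -/
def mu : Multiplicative (ZMod 8 × ZMod (2 ^ (n - 2 + 1))) →* Hgrp n :=
  MonoidHom.mk'
    (fun p => ⟨Multiplicative.ofAdd (Multiplicative.toAdd p).1,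
               Multiplicative.ofAdd (2 * (Multiplicative.toAdd p).2)⟩)
    (by
      intro p q
      ext
      · show Multiplicative.ofAdd ((Multiplicative.toAdd p).1 + (Multiplicative.toAdd q).1) =
          Multiplicative.ofAdd (Multiplicative.toAdd p).1 *
            phi n (Multiplicative.ofAdd (2 * (Multiplicative.toAdd p).2))
              (Multiplicative.ofAdd (Multiplicative.toAdd q).1)
        rw [phi_two]
        rfl
      · show Multiplicative.ofAdd (2 * ((Multiplicative.toAdd p).2 +
            (Multiplicative.toAdd q).2)) =
          Multiplicative.ofAdd (2 * (Multiplicative.toAdd p).2) *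
            Multiplicative.ofAdd (2 * (Multiplicative.toAdd q).2)
        rw [← ofAdd_add, mul_add])

lemma mu_apply (u : ZMod 8) (v : ZMod (2 ^ (n - 2 + 1))) :
    mu n (Multiplicative.ofAdd (u, v)) =
      ⟨Multiplicative.ofAdd u, Multiplicative.ofAdd (2 * v)⟩ := rfl

/-- the central element whose quotient we take. -/
def zc : Hgrp n := mu n (Multiplicative.ofAdd (4, 2 ^ (n - 3)))

lemma zc_central (h : Hgrp n) : zc n * h = h * zc n := by
  rw [show zc n = ⟨Multiplicative.ofAdd 4, Multiplicative.ofAdd (2 * 2 ^ (n-3))⟩ from rfl]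
  ext : 1
  · show Multiplicative.ofAdd 4 * phi n (Multiplicative.ofAdd (2 * 2^(n-3))) h.left
        = h.left * phi n h.right (Multiplicative.ofAdd 4)
    rw [phi_two, phi_fix4]
    show Multiplicative.ofAdd 4 * h.left = h.left * Multiplicative.ofAdd 4
    exact mul_comm _ _
  · exact mul_comm _ _

instance zc_normal : (Subgroup.zpowers (zc n)).Normal := by
  constructor
  intro w hw g
  obtain ⟨k, rfl⟩ := Subgroup.mem_zpowers_iff.mp hw
  have hc : Commute (zc n) g := zc_central n g
  have h2 : g * (zc n) ^ k * g⁻¹ = (zc n) ^ k := by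
    rw [← (hc.zpow_left k).eq, mul_assoc, mul_inv_cancel, mul_one]
  rw [h2]
  exact hw

/-- the model group. -/
abbrev Gq := Hgrp n ⧸ Subgroup.zpowers (zc n)

lemma cast_nat_zmod_eq_zero (M a : ℕ) [NeZero M] (h : M ∣ a) : ((a : ℕ) : ZMod M) = 0 :=
  (ZMod.natCast_eq_zero_iff a M).2 h

lemma two_pow_cast (k : ℕ) :
    ((2 ^ k : ℕ) : ZMod (2 ^ (n - 2 + 1))) = (2 : ZMod (2 ^ (n - 2 + 1))) ^ k := by
  push_cast
  ring

lemma zc_sq (hn : 5 ≤ n) : zc n * zc n = 1 := by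
  rw [zc, ← map_mul, ← ofAdd_add]
  have h1 : ((4 : ZMod 8), ((2:ZMod (2 ^ (n - 2 + 1))) ^ (n-3))) + (4, 2 ^ (n-3))
      = (0, 2 ^ (n-3) + 2 ^ (n-3)) := by
    rw [Prod.mk_add_mk]
    refine Prod.ext (show (4 + 4 : ZMod 8) = 0 from by decide) rfl
  rw [h1, mu_apply]
  have h2 : (2 * ((2:ZMod (2 ^ (n - 2 + 1))) ^ (n-3) + 2 ^ (n-3))) = 0 := by
    have h3 : (2 * ((2:ZMod (2 ^ (n - 2 + 1))) ^ (n-3) + 2 ^ (n-3)))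
        = ((2 * (2 ^ (n-3) + 2 ^ (n-3)) : ℕ) : ZMod (2 ^ (n - 2 + 1))) := by
      push_cast
      ring
    rw [h3]
    apply cast_nat_zmod_eq_zero
    refine ⟨1, ?_⟩
    have e : n - 2 + 1 = (n - 3) + 2 := by omega
    rw [e]
    ring
  rw [h2]
  ext
  · show Multiplicative.ofAdd ((0:ZMod 8)) = 1
    rfl
  · show Multiplicative.ofAdd ((0: ZMod (2 ^ (n - 2 + 1)))) = 1
    rfl

/-! ### The homomorphism from `K n` to the model group -/

/-- image of the generator `a` in `Hgrp`. -/
def aH : Hgrp n := SemidirectProduct.inl (Multiplicative.ofAdd (1 : ZMod 8))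

/-- image of the generator `b` in `Hgrp`. -/
def bH : Hgrp n := SemidirectProduct.inr (Multiplicative.ofAdd (1 : ZMod (2 ^ (n - 2 + 1))))

lemma aH_pow (k : ℕ) :
    aH n ^ k = SemidirectProduct.inl (Multiplicative.ofAdd ((k : ZMod 8))) := by
  rw [aH, ← map_pow, ← ofAdd_nsmul, nsmul_eq_mul, mul_one]

lemma aH_zpow (k : ℤ) :
    aH n ^ k = SemidirectProduct.inl (Multiplicative.ofAdd ((k : ZMod 8))) := by
  rw [aH, ← map_zpow, ← ofAdd_zsmul, zsmul_eq_mul, mul_one]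

lemma bH_pow (k : ℕ) :
    bH n ^ k = SemidirectProduct.inr
      (Multiplicative.ofAdd ((k : ZMod (2 ^ (n - 2 + 1))))) := by
  rw [bH, ← map_pow, ← ofAdd_nsmul, nsmul_eq_mul, mul_one]

lemma conj_rel_H : bH n * aH n * (bH n)⁻¹ = aH n ^ (kAlpha n) := by
  rw [aH_zpow]
  rw [show bH n * aH n =
      (⟨phi n (Multiplicative.ofAdd 1) (Multiplicative.ofAdd 1), Multiplicative.ofAdd 1⟩ :
        Hgrp n) from by
    ext : 1
    · show (1 : Multiplicative (ZMod 8)) * phi n (Multiplicative.ofAdd 1)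
        (Multiplicative.ofAdd 1) = _
      rw [one_mul]
    · show Multiplicative.ofAdd (1 : ZMod (2 ^ (n - 2 + 1))) * 1 = _
      rw [mul_one]]
  rw [phi_one_eq_tau, tau_apply, mul_one]
  rw [show (bH n)⁻¹ = SemidirectProduct.inr (Multiplicative.ofAdd
    (1 : ZMod (2 ^ (n - 2 + 1))))⁻¹ from by rw [bH, ← map_inv]]
  ext
  · show Multiplicative.ofAdd ((kAlpha n : ZMod 8)) *
      phi n (Multiplicative.ofAdd 1) 1 = Multiplicative.ofAdd ((kAlpha n : ZMod 8))
    rw [map_one, mul_one]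
  · show Multiplicative.ofAdd (1 : ZMod (2 ^ (n - 2 + 1))) *
      (Multiplicative.ofAdd (1 : ZMod (2 ^ (n - 2 + 1))))⁻¹ = 1
    rw [mul_inv_cancel]

lemma second_rel_H (hn : 5 ≤ n) : bH n ^ 2 ^ (n - 2) * (aH n ^ 4)⁻¹ = zc n := by
  rw [bH_pow, show (aH n ^ 4)⁻¹ = SemidirectProduct.inl
      ((Multiplicative.ofAdd ((4 : ZMod 8)))⁻¹) from by rw [aH_pow, ← map_inv]; norm_num]
  have hcast : ((2 ^ (n-2) : ℕ) : ZMod (2 ^ (n - 2 + 1))) =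
      2 * (2 : ZMod (2 ^ (n - 2 + 1))) ^ (n - 3) := by
    rw [two_pow_cast, show n - 2 = (n-3) + 1 from by omega, pow_succ]
    ring
  ext
  · show (1 : Multiplicative (ZMod 8)) * phi n (Multiplicative.ofAdd ((2 ^ (n-2) : ℕ)))
      (Multiplicative.ofAdd (4 : ZMod 8))⁻¹ = (zc n).left
    rw [one_mul, hcast, phi_two]
    show (Multiplicative.ofAdd (4 : ZMod 8))⁻¹ = Multiplicative.ofAdd (4 : ZMod 8)
    rw [← ofAdd_neg]
    norm_num
    decide
  · show Multiplicative.ofAdd ((2 ^ (n-2) : ℕ) : ZMod (2 ^ (n - 2 + 1))) * 1 = (zc n).right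
    rw [mul_one, hcast]
    rfl

/-- assignment of model elements to the generators. -/
def fmodel : Bool → Gq n := fun t =>
  if t then QuotientGroup.mk (aH n) else QuotientGroup.mk (bH n)

lemma rel_check (hn : 5 ≤ n) : ∀ r ∈ kRels n, FreeGroup.lift (fmodel n) r = 1 := by
  intro r hr
  have fa : FreeGroup.lift (fmodel n) (FreeGroup.of true) = QuotientGroup.mk (aH n) := by
    rw [FreeGroup.lift_apply_of]; rfl
  have fb : FreeGroup.lift (fmodel n) (FreeGroup.of false) = QuotientGroup.mk (bH n) := by
    rw [FreeGroup.lift_apply_of]; rfl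
  simp only [kRels, Set.mem_insert_iff, Set.mem_singleton_iff] at hr
  rcases hr with rfl | rfl | rfl
  · rw [map_pow, fa, ← QuotientGroup.mk_pow, aH_pow]
    rw [show ((8 : ℕ) : ZMod 8) = 0 from by decide]
    rw [show Multiplicative.ofAdd (0 : ZMod 8) = 1 from rfl, map_one]
    rfl
  · rw [map_mul, map_inv, map_pow, map_pow, fa, fb, ← QuotientGroup.mk_pow,
      ← QuotientGroup.mk_pow, ← QuotientGroup.mk_inv, ← QuotientGroup.mk_mul,
      second_rel_H n hn, QuotientGroup.eq_one_iff]
    exact Subgroup.mem_zpowers _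
  · rw [map_mul, map_mul, map_mul, map_inv, map_inv, map_zpow, fa, fb,
      ← QuotientGroup.mk_inv, ← QuotientGroup.mk_mul, ← QuotientGroup.mk_mul,
      ← QuotientGroup.mk_zpow, ← QuotientGroup.mk_inv, ← QuotientGroup.mk_mul,
      conj_rel_H, mul_inv_cancel]
    rfl

/-- the homomorphism from `K n` to the model group. -/
def Phi (hn : 5 ≤ n) : K n →* Gq n := PresentedGroup.toGroup (rel_check n hn)

lemma Phi_a (hn : 5 ≤ n) : Phi n hn (ka n) = QuotientGroup.mk (aH n) := by
  rw [ka, Phi, PresentedGroup.toGroup.of]; rfl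

lemma Phi_b (hn : 5 ≤ n) : Phi n hn (kb n) = QuotientGroup.mk (bH n) := by
  rw [kb, Phi, PresentedGroup.toGroup.of]; rfl

/-- the parametrized abelian subgroup, in the quotient model. -/
def nu : Multiplicative (ZMod 8 × ZMod (2 ^ (n - 2 + 1))) →* Gq n :=
  (QuotientGroup.mk' _).comp (mu n)

lemma nu_eq_one (hn : 5 ≤ n) (u : ZMod 8) (v : ZMod (2 ^ (n - 2 + 1)))
    (h : nu n (Multiplicative.ofAdd (u, v)) = 1) :
    (u = 0 ∧ 2 * v = 0) ∨ (u = 4 ∧ 2 * v = 2 * 2 ^ (n - 3)) := by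
  have hm : mu n (Multiplicative.ofAdd (u, v)) ∈ Subgroup.zpowers (zc n) :=
    (QuotientGroup.eq_one_iff _).1 h
  obtain ⟨k, hk⟩ := Subgroup.mem_zpowers_iff.mp hm
  have hz2 : (zc n) ^ (2 : ℤ) = 1 := by
    rw [show ((2:ℤ)) = ((2:ℕ):ℤ) from rfl, zpow_natCast, pow_two]
    exact zc_sq n hn
  rcases Int.even_or_odd k with ⟨t, ht⟩ | ⟨t, ht⟩
  · left
    have : mu n (Multiplicative.ofAdd (u, v)) = 1 := by
      rw [← hk, ht, show t + t = 2 * t from by ring, zpow_mul, hz2, one_zpow]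
    have hl := congrArg SemidirectProduct.left this
    have hr := congrArg SemidirectProduct.right this
    rw [mu_apply] at hl hr
    constructor
    · exact Multiplicative.ofAdd.injective hl
    · exact Multiplicative.ofAdd.injective hr
  · right
    have : mu n (Multiplicative.ofAdd (u, v)) = zc n := by
      rw [← hk, ht, zpow_add, zpow_one, zpow_mul, hz2, one_zpow, one_mul]
    have hl := congrArg SemidirectProduct.left this
    have hr := congrArg SemidirectProduct.right this
    rw [mu_apply] at hl hr
    constructor
    · exact Multiplicative.ofAdd.injective hl
    · exact Multiplicative.ofAdd.injective hr

lemma Phi_x (hn : 5 ≤ n) : Phi n hn (((kb n)⁻¹) ^ 2) =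
    nu n (Multiplicative.ofAdd ((0 : ZMod 8), (-1 : ZMod (2 ^ (n - 2 + 1))))) := by
  have key : (bH n)⁻¹ ^ 2 = mu n (Multiplicative.ofAdd ((0 : ZMod 8), -1)) := by
    rw [bH, ← map_inv, ← map_pow, ← ofAdd_neg, ← ofAdd_nsmul, mu_apply]
    ext
    · rfl
    · show Multiplicative.ofAdd ((2 : ℕ) • (-1 : ZMod (2 ^ (n - 2 + 1)))) =
        Multiplicative.ofAdd (2 * (-1 : ZMod (2 ^ (n - 2 + 1))))
      rw [nsmul_eq_mul, Nat.cast_ofNat]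
  rw [map_pow, map_inv, Phi_b, ← QuotientGroup.mk_inv, ← QuotientGroup.mk_pow, key, nu]
  rfl

lemma Phi_ka (hn : 5 ≤ n) : Phi n hn (ka n) =
    nu n (Multiplicative.ofAdd ((1 : ZMod 8), (0 : ZMod (2 ^ (n - 2 + 1))))) := by
  have key : aH n = mu n (Multiplicative.ofAdd ((1 : ZMod 8), 0)) := by
    rw [mu_apply, mul_zero]
    rfl
  rw [Phi_a, key, nu]
  rfl

lemma Phi_word (hn : 5 ≤ n) (s t : ℕ) :
    Phi n hn ((((kb n)⁻¹) ^ 2) ^ s * (ka n) ^ t) =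
      nu n (Multiplicative.ofAdd (((t : ZMod 8)),
        -(s : ZMod (2 ^ (n - 2 + 1))))) := by
  rw [map_mul, map_pow _ _ s, map_pow _ (ka n) t, Phi_x n hn, Phi_ka n hn, ← map_pow (nu n),
    ← map_pow (nu n), ← map_mul, ← ofAdd_nsmul, ← ofAdd_nsmul, ← ofAdd_add]
  congr 1
  congr 1
  rw [Prod.smul_mk, Prod.smul_mk, Prod.mk_add_mk]
  refine Prod.ext ?_ ?_
  · show s • (0 : ZMod 8) + t • (1 : ZMod 8) = (t : ZMod 8)
    rw [smul_zero, zero_add, nsmul_eq_mul, mul_one]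
  · show s • (-1 : ZMod (2 ^ (n - 2 + 1))) + t • (0 : ZMod (2 ^ (n - 2 + 1))) = -(s : _)
    rw [smul_zero, add_zero, nsmul_eq_mul, mul_neg_one]

lemma word_inj (hn : 5 ≤ n) (s t s' t' : ℕ) (hs : s < 2 ^ (n - 3)) (hs' : s' < 2 ^ (n - 3))
    (ht : t < 8) (ht' : t' < 8)
    (heq : (((kb n)⁻¹) ^ 2) ^ s * (ka n) ^ t = (((kb n)⁻¹) ^ 2) ^ s' * (ka n) ^ t') :
    s = s' ∧ t = t' := by
  have hm4 : 2 ^ (n - 2 + 1) = 4 * 2 ^ (n - 3) := by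
    rw [show n - 2 + 1 = (n - 3) + 2 from by omega]; ring
  have h := congrArg (Phi n hn) heq
  rw [Phi_word n hn, Phi_word n hn] at h
  have h1 : nu n (Multiplicative.ofAdd (((t : ZMod 8) - t'),
      ((s' : ZMod (2 ^ (n - 2 + 1))) - s))) = 1 := by
    have hpq : (((t : ZMod 8) - t'), ((s' : ZMod (2 ^ (n - 2 + 1))) - s)) =
        (((t : ZMod 8)), -(s : ZMod (2 ^ (n - 2 + 1)))) +
          (-(((t' : ZMod 8)), -(s' : ZMod (2 ^ (n - 2 + 1))))) := by
      refine Prod.ext ?_ ?_ <;> simp <;> ring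
    rw [hpq, ofAdd_add, ofAdd_neg, map_mul, map_inv, h, mul_inv_cancel]
  have hsv : 2 * s < 2 ^ (n - 2 + 1) := by omega
  have hsv' : 2 * s' < 2 ^ (n - 2 + 1) := by omega
  rcases nu_eq_one n hn _ _ h1 with ⟨e1, e2⟩ | ⟨e1, e2⟩
  · constructor
    · -- 2 * (s' - s) = 0
      have e3 : ((2 * s' : ℕ) : ZMod (2 ^ (n - 2 + 1))) = ((2 * s : ℕ) : _) := by
        push_cast
        rw [mul_sub] at e2
        linear_combination e2
      have := congrArg ZMod.val e3
      rw [ZMod.val_cast_of_lt hsv, ZMod.val_cast_of_lt hsv'] at this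
      omega
    · have e3 : ((t : ℕ) : ZMod 8) = ((t' : ℕ) : _) := by
        rw [sub_eq_zero] at e1
        exact e1
      have := congrArg ZMod.val e3
      rw [ZMod.val_cast_of_lt ht, ZMod.val_cast_of_lt ht'] at this
      omega
  · exfalso
    have e3 : ((2 * s' : ℕ) : ZMod (2 ^ (n - 2 + 1))) =
        ((2 * s + 2 ^ (n - 2) : ℕ) : ZMod (2 ^ (n - 2 + 1))) := by
      push_cast
      rw [mul_sub] at e2
      rw [show ((2:ZMod (2 ^ (n - 2 + 1)))^(n-2)) = 2 * 2 ^ (n-3) from by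
        rw [show n - 2 = (n - 3) + 1 from by omega, pow_succ]; ring]
      linear_combination e2
    have hb : 2 * s + 2 ^ (n - 2) < 2 ^ (n - 2 + 1) := by
      have : (2:ℕ) ^ (n - 2) = 2 * 2 ^ (n - 3) := by
        rw [show n - 2 = (n - 3) + 1 from by omega]; ring
      omega
    have := congrArg ZMod.val e3
    rw [ZMod.val_cast_of_lt hsv', ZMod.val_cast_of_lt hb] at this
    have : (2:ℕ) ^ (n - 2) = 2 * 2 ^ (n - 3) := by
      rw [show n - 2 = (n - 3) + 1 from by omega]; ring
    omega

/-! ### The abelian subgroup `K⁺` -/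

/-- The subgroup `K⁺ = ⟨b⁻², a⟩`. -/
abbrev Kp : Subgroup (K n) := Subgroup.closure {((kb n)⁻¹) ^ 2, ka n}

lemma x_mem : ((kb n)⁻¹) ^ 2 ∈ Kp n := Subgroup.subset_closure (Set.mem_insert _ _)

lemma a_mem : ka n ∈ Kp n := Subgroup.subset_closure (Set.mem_insert_of_mem _ rfl)

lemma cxa : Commute (((kb n)⁻¹) ^ 2) (ka n) := comm_ba n

lemma x_pow_m (hn : 5 ≤ n) : (((kb n)⁻¹) ^ 2) ^ 2 ^ (n - 2) = 1 := by
  rw [← pow_mul, inv_pow, show 2 * 2 ^ (n-2) = 2 ^ (n-2) * 2 from by ring, pow_mul, rb,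
    ← pow_mul, show 4 * 2 = 8 from rfl, ra8, inv_one]

lemma x_pow_half (hn : 5 ≤ n) : (((kb n)⁻¹) ^ 2) ^ 2 ^ (n - 3) = ((ka n) ^ 4)⁻¹ := by
  rw [← pow_mul, inv_pow, show 2 * 2 ^ (n-3) = 2 ^ (n-2) from by
    rw [show n - 2 = (n-3) + 1 from by omega]; ring, rb]

/-- the second generator of `K⁺` in the direct product decomposition. -/
def hel : K n := ka n * (((((kb n)⁻¹) ^ 2) ^ 2 ^ (n - 5))⁻¹)

lemma hel_mem : hel n ∈ Kp n :=
  mul_mem (a_mem n) (inv_mem (pow_mem (x_mem n) _))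

lemma c_x_hel : Commute (((kb n)⁻¹) ^ 2) (hel n) :=
  Commute.mul_right (cxa n) (((Commute.refl _).pow_right _).inv_right)

lemma hel4 (hn : 5 ≤ n) : hel n ^ 4 = 1 := by
  have hc : Commute (ka n) (((((kb n)⁻¹) ^ 2) ^ 2 ^ (n - 5))⁻¹) :=
    ((cxa n).symm.pow_right _).inv_right
  rw [hel, hc.mul_pow, inv_pow, ← pow_mul, show 2 ^ (n-5) * 4 = 2 ^ (n-3) from by
    rw [show n - 3 = (n-5) + 2 from by omega]; ring, x_pow_half n hn, inv_inv, ← pow_add]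
  rw [show 4 + 4 = 8 from rfl, ra8]

/-- the direct product parametrization of `K⁺`. -/
def theta (hn : 5 ≤ n) :
    Multiplicative (ZMod (2 ^ (n - 2))) × Multiplicative (ZMod 4) →* K n :=
  MonoidHom.mk'
    (fun p => (((kb n)⁻¹) ^ 2) ^ (Multiplicative.toAdd p.1).val *
      hel n ^ (Multiplicative.toAdd p.2).val)
    (by
      intro p q
      show (((kb n)⁻¹) ^ 2) ^ ((Multiplicative.toAdd p.1) + Multiplicative.toAdd q.1).val *
          hel n ^ ((Multiplicative.toAdd p.2) + Multiplicative.toAdd q.2).val = _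
      rw [ZMod.val_add, ZMod.val_add, pow_mod_one (x_pow_m n hn), pow_mod_one (hel4 n hn),
        pow_add, pow_add]
      rw [show (((kb n)⁻¹) ^ 2) ^ (Multiplicative.toAdd p.1).val *
            (((kb n)⁻¹) ^ 2) ^ (Multiplicative.toAdd q.1).val *
            (hel n ^ (Multiplicative.toAdd p.2).val * hel n ^ (Multiplicative.toAdd q.2).val) =
          (((kb n)⁻¹) ^ 2) ^ (Multiplicative.toAdd p.1).val *
            ((((kb n)⁻¹) ^ 2) ^ (Multiplicative.toAdd q.1).val *
              hel n ^ (Multiplicative.toAdd p.2).val) *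
            hel n ^ (Multiplicative.toAdd q.2).val from by group]
      rw [((c_x_hel n).pow_pow _ _).eq, ← mul_assoc, ← mul_assoc])

lemma theta_mem (hn : 5 ≤ n) (p) : theta n hn p ∈ Kp n :=
  mul_mem (pow_mem (x_mem n) _) (pow_mem (hel_mem n) _)

lemma theta_x (hn : 5 ≤ n) :
    theta n hn (Multiplicative.ofAdd (1 : ZMod (2 ^ (n - 2))), 1) = ((kb n)⁻¹) ^ 2 := by
  show (((kb n)⁻¹) ^ 2) ^ (1 : ZMod (2 ^ (n - 2))).val * hel n ^ (0 : ZMod 4).val = _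
  have hv1 : (1 : ZMod (2 ^ (n - 2))).val = 1 := by
    rw [← Nat.cast_one, ZMod.val_cast_of_lt]
    exact Nat.one_lt_two_pow (by omega)
  rw [hv1, ZMod.val_zero, pow_one, pow_zero, mul_one]

lemma theta_a (hn : 5 ≤ n) :
    theta n hn (Multiplicative.ofAdd (((2 ^ (n - 5) : ℕ) : ZMod (2 ^ (n - 2)))),
      Multiplicative.ofAdd (1 : ZMod 4)) = ka n := by
  show (((kb n)⁻¹) ^ 2) ^ ((2 ^ (n - 5) : ℕ) : ZMod (2 ^ (n - 2))).val *
    hel n ^ (1 : ZMod 4).val = _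
  rw [ZMod.val_cast_of_lt (Nat.pow_lt_pow_right (by norm_num) (by omega)),
    show (1 : ZMod 4).val = 1 from rfl, pow_one, hel, ← mul_assoc,
    ((cxa n).pow_left _).eq, mul_inv_cancel_right]

lemma theta_surj_mem (hn : 5 ≤ n) {w : K n} (hw : w ∈ Kp n) : ∃ p, theta n hn p = w := by
  refine Subgroup.closure_induction ?_ ?_ ?_ ?_ hw
  · intro g hg
    rcases hg with rfl | hg
    · exact ⟨_, theta_x n hn⟩
    · rw [Set.mem_singleton_iff] at hg
      subst hg
      exact ⟨_, theta_a n hn⟩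
  · exact ⟨1, map_one _⟩
  · rintro g g' _ _ ⟨p, rfl⟩ ⟨q, rfl⟩
    exact ⟨p * q, map_mul _ _ _⟩
  · rintro g _ ⟨p, rfl⟩
    exact ⟨p⁻¹, map_inv _ _⟩

/-- `theta` as a homomorphism into `K⁺`. -/
def theta' (hn : 5 ≤ n) :
    Multiplicative (ZMod (2 ^ (n - 2))) × Multiplicative (ZMod 4) →* Kp n :=
  (theta n hn).codRestrict _ (theta_mem n hn)

lemma theta'_surj (hn : 5 ≤ n) : Function.Surjective (theta' n hn) := by
  rintro ⟨w, hw⟩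
  obtain ⟨p, hp⟩ := theta_surj_mem n hn hw
  exact ⟨p, Subtype.ext hp⟩

lemma finite_Kp (hn : 5 ≤ n) : Finite (Kp n) :=
  Finite.of_surjective _ (theta'_surj n hn)

lemma card_D : Nat.card (Multiplicative (ZMod (2 ^ (n - 2))) × Multiplicative (ZMod 4))
    = 2 ^ (n - 2) * 4 := by
  rw [Nat.card_prod, Nat.card_congr Multiplicative.toAdd, Nat.card_congr Multiplicative.toAdd,
    Nat.card_zmod, Nat.card_zmod]

lemma card_pow_eq (hn : 5 ≤ n) : 2 ^ (n - 2) * 4 = 2 ^ n := by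
  conv_rhs => rw [show n = (n - 2) + 2 from by omega]
  ring

/-- the injection used for the lower cardinality bound. -/
def jinj (hn : 5 ≤ n) : ZMod (2 ^ (n - 3)) × ZMod 8 → Kp n := fun p =>
  ⟨(((kb n)⁻¹) ^ 2) ^ p.1.val * (ka n) ^ p.2.val,
    mul_mem (pow_mem (x_mem n) _) (pow_mem (a_mem n) _)⟩

lemma jinj_inj (hn : 5 ≤ n) : Function.Injective (jinj n hn) := by
  intro p q h
  rw [Subtype.ext_iff] at h
  obtain ⟨h1, h2⟩ := word_inj n hn _ _ _ _ (ZMod.val_lt _) (ZMod.val_lt _)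
    (ZMod.val_lt _) (ZMod.val_lt _) h
  exact Prod.ext (ZMod.val_injective _ h1) (ZMod.val_injective _ h2)

lemma card_Kp (hn : 5 ≤ n) : Nat.card (Kp n) = 2 ^ n := by
  haveI := finite_Kp n hn
  refine le_antisymm ?_ ?_
  · have h := Nat.card_le_card_of_surjective _ (theta'_surj n hn)
    rwa [card_D, card_pow_eq n hn] at h
  · have h := Nat.card_le_card_of_injective _ (jinj_inj n hn)
    rwa [Nat.card_prod, Nat.card_zmod, Nat.card_zmod,
      show 2 ^ (n - 3) * 8 = 2 ^ n from by
        conv_rhs => rw [show n = (n - 3) + 3 from by omega]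
        ring] at h

lemma theta'_bij (hn : 5 ≤ n) : Function.Bijective (theta' n hn) := by
  haveI := finite_Kp n hn
  refine (Nat.bijective_iff_surjective_and_card _).2 ⟨theta'_surj n hn, ?_⟩
  rw [card_D, card_pow_eq n hn, card_Kp n hn]

/-! ### Involutions in `K⁺` -/

lemma two_pow_sub_cast (hn : 5 ≤ n) :
    ((2 ^ (n - 3) : ℕ) : ZMod (2 ^ (n - 2))) ≠ 0 := by
  intro h
  have := congrArg ZMod.val h
  rw [ZMod.val_cast_of_lt (Nat.pow_lt_pow_right (by norm_num) (by omega)), ZMod.val_zero] at this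
  exact (pow_ne_zero (n - 3) (by norm_num : (2:ℕ) ≠ 0)) this

lemma s0_two (hn : 5 ≤ n) :
    ((2 ^ (n - 3) : ℕ) : ZMod (2 ^ (n - 2))) + ((2 ^ (n - 3) : ℕ) : ZMod (2 ^ (n - 2))) = 0 := by
  rw [← Nat.cast_add, show (2 ^ (n-3) + 2 ^ (n-3) : ℕ) = 2 ^ (n - 2) from by
    rw [show n - 2 = (n-3) + 1 from by omega]; ring, ZMod.natCast_self]

lemma s_classify (hn : 5 ≤ n) (s : ZMod (2 ^ (n - 2))) (h : s + s = 0) :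
    s = 0 ∨ s = ((2 ^ (n - 3) : ℕ) : ZMod (2 ^ (n - 2))) := by
  have hs : ((s.val : ℕ) : ZMod (2 ^ (n - 2))) = s := by
    rw [ZMod.natCast_val, ZMod.cast_id]
  have h2 : ((s.val + s.val : ℕ) : ZMod (2 ^ (n - 2))) = 0 := by
    push_cast
    rw [hs]
    exact h
  rw [ZMod.natCast_eq_zero_iff] at h2
  obtain ⟨c, hc⟩ := h2
  have hlt := ZMod.val_lt s
  have hP : (2:ℕ) ^ (n - 2) = 2 * 2 ^ (n - 3) := by
    rw [show n - 2 = (n-3) + 1 from by omega]; ring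
  have hc2 : c = 0 ∨ c = 1 := by
    rcases Nat.lt_or_ge c 2 with h | h
    · omega
    · exfalso; nlinarith [Nat.one_le_two_pow (n := n - 2)]
  rcases hc2 with rfl | rfl
  · left
    have : s.val = 0 := by omega
    rw [← hs, this, Nat.cast_zero]
  · right
    have : s.val = 2 ^ (n - 3) := by omega
    rw [← hs, this]

lemma t_classify (t : ZMod 4) (h : t + t = 0) : t = 0 ∨ t = 2 := by
  revert h
  revert t
  decide

lemma theta_inj (hn : 5 ≤ n) : Function.Injective (theta n hn) := fun p q h =>
  (theta'_bij n hn).1 (Subtype.ext h)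

/-- the three involutions, as parameters. -/
def p1 : Multiplicative (ZMod (2 ^ (n - 2))) × Multiplicative (ZMod 4) :=
  (Multiplicative.ofAdd ((2 ^ (n - 3) : ℕ) : ZMod (2 ^ (n - 2))), 1)

def p2 : Multiplicative (ZMod (2 ^ (n - 2))) × Multiplicative (ZMod 4) :=
  (1, Multiplicative.ofAdd (2 : ZMod 4))

def p3 : Multiplicative (ZMod (2 ^ (n - 2))) × Multiplicative (ZMod 4) :=
  (Multiplicative.ofAdd ((2 ^ (n - 3) : ℕ) : ZMod (2 ^ (n - 2))),
    Multiplicative.ofAdd (2 : ZMod 4))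

lemma p_mul_self (hn : 5 ≤ n) : p1 n * p1 n = 1 ∧ p2 n * p2 n = 1 ∧ p3 n * p3 n = 1 := by
  refine ⟨?_, ?_, ?_⟩
  · rw [p1, Prod.mk_mul_mk, ← ofAdd_add, s0_two n hn, mul_one]
    rfl
  · rw [p2, Prod.mk_mul_mk, one_mul, ← ofAdd_add,
      show (2 + 2 : ZMod 4) = 0 from by decide]
    rfl
  · rw [p3, Prod.mk_mul_mk, ← ofAdd_add, ← ofAdd_add, s0_two n hn,
      show (2 + 2 : ZMod 4) = 0 from by decide]
    rfl

lemma p_ne_one (hn : 5 ≤ n) : p1 n ≠ 1 ∧ p2 n ≠ 1 ∧ p3 n ≠ 1 := by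
  refine ⟨?_, ?_, ?_⟩
  · intro h
    exact two_pow_sub_cast n hn (Multiplicative.ofAdd.injective
      (congrArg Prod.fst h : Multiplicative.ofAdd ((2 ^ (n-3) : ℕ) : ZMod (2 ^ (n - 2))) =
        Multiplicative.ofAdd 0))
  · intro h
    have h2 : (2 : ZMod 4) = 0 := Multiplicative.ofAdd.injective
      (congrArg Prod.snd h : Multiplicative.ofAdd (2 : ZMod 4) = Multiplicative.ofAdd 0)
    exact absurd h2 (by decide)
  · intro h
    exact two_pow_sub_cast n hn (Multiplicative.ofAdd.injective
      (congrArg Prod.fst h : Multiplicative.ofAdd ((2 ^ (n-3) : ℕ) : ZMod (2 ^ (n - 2))) =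
        Multiplicative.ofAdd 0))

lemma p_distinct (hn : 5 ≤ n) : p1 n ≠ p2 n ∧ p1 n ≠ p3 n ∧ p2 n ≠ p3 n := by
  refine ⟨?_, ?_, ?_⟩
  · intro h
    exact two_pow_sub_cast n hn (Multiplicative.ofAdd.injective
      (congrArg Prod.fst h : Multiplicative.ofAdd ((2 ^ (n-3) : ℕ) : ZMod (2 ^ (n - 2))) =
        Multiplicative.ofAdd 0))
  · intro h
    have h2 : (0 : ZMod 4) = 2 := Multiplicative.ofAdd.injective
      (congrArg Prod.snd h : Multiplicative.ofAdd (0 : ZMod 4) = Multiplicative.ofAdd 2)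
    exact absurd h2 (by decide)
  · intro h
    have h2 : (0 : ZMod (2 ^ (n - 2))) = ((2 ^ (n-3) : ℕ) : ZMod (2 ^ (n - 2))) :=
      Multiplicative.ofAdd.injective
        (congrArg Prod.fst h : Multiplicative.ofAdd (0 : ZMod (2 ^ (n - 2))) =
          Multiplicative.ofAdd ((2 ^ (n-3) : ℕ) : ZMod (2 ^ (n - 2))))
    exact two_pow_sub_cast n hn h2.symm

lemma invo_orderOf (hn : 5 ≤ n) {p : Multiplicative (ZMod (2 ^ (n - 2))) × Multiplicative (ZMod 4)}
    (hsq : p * p = 1) (hne : p ≠ 1) : orderOf (theta n hn p) = 2 := by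
  refine orderOf_eq_prime ?_ ?_
  · rw [pow_two, ← map_mul, hsq]
    exact map_one _
  · intro h
    exact hne (theta_inj n hn (by rw [h, map_one]))

lemma invo_set (hn : 5 ≤ n) :
    {g : K n | orderOf g = 2 ∧ g ∈ Kp n} =
      {theta n hn (p1 n), theta n hn (p2 n), theta n hn (p3 n)} := by
  ext g
  simp only [Set.mem_setOf_eq, Set.mem_insert_iff, Set.mem_singleton_iff]
  constructor
  · rintro ⟨ho, hm⟩
    obtain ⟨p, rfl⟩ := theta_surj_mem n hn hm
    have hsq : p * p = 1 := by
      apply theta_inj n hn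
      rw [map_mul, map_one, ← pow_two]
      have h0 := pow_orderOf_eq_one (theta n hn p)
      rwa [ho] at h0
    have hne : p ≠ 1 := by
      rintro rfl
      rw [map_one, orderOf_one] at ho
      omega
    have h1 := congrArg Prod.fst hsq
    have h2 := congrArg Prod.snd hsq
    have hs := s_classify n hn (Multiplicative.toAdd p.1)
      (Multiplicative.ofAdd.injective (by
        rw [ofAdd_add]
        exact h1))
    have ht := t_classify (Multiplicative.toAdd p.2)
      (Multiplicative.ofAdd.injective (by
        rw [ofAdd_add]
        exact h2))
    have hp : p = (Multiplicative.ofAdd (Multiplicative.toAdd p.1),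
        Multiplicative.ofAdd (Multiplicative.toAdd p.2)) := rfl
    rcases hs with hs | hs <;> rcases ht with ht | ht
    · exfalso
      apply hne
      rw [hp, hs, ht]
      rfl
    · right; left
      congr 1
      rw [hp, hs, ht]
      rfl
    · left
      congr 1
      rw [hp, hs, ht]
      rfl
    · right; right
      congr 1
      rw [hp, hs, ht]
      rfl
  · intro h
    obtain ⟨hq1, hq2, hq3⟩ := p_mul_self n hn
    obtain ⟨hn1, hn2, hn3⟩ := p_ne_one n hn
    rcases h with rfl | rfl | rfl
    · exact ⟨invo_orderOf n hn hq1 hn1, theta_mem n hn _⟩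
    · exact ⟨invo_orderOf n hn hq2 hn2, theta_mem n hn _⟩
    · exact ⟨invo_orderOf n hn hq3 hn3, theta_mem n hn _⟩

lemma invo_card (hn : 5 ≤ n) :
    Nat.card {g : K n | orderOf g = 2 ∧ g ∈ Kp n} = 3 := by
  rw [Nat.card_coe_set_eq, invo_set n hn]
  obtain ⟨hd1, hd2, hd3⟩ := p_distinct n hn
  have tinj := theta_inj n hn
  rw [Set.ncard_insert_of_notMem (by
    simp only [Set.mem_insert_iff, Set.mem_singleton_iff]
    push_neg
    exact ⟨fun h => hd1 (tinj h), fun h => hd2 (tinj h)⟩)]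
  rw [Set.ncard_pair (fun h => hd3 (tinj h))]

/-! ### The index-two property -/

lemma pitwo_check (hn : 5 ≤ n) : ∀ r ∈ kRels n,
    FreeGroup.lift (fun t => if t then 1 else Multiplicative.ofAdd (1 : ZMod 2)) r = 1 := by
  intro r hr
  have fa : FreeGroup.lift (fun t => if t then 1 else Multiplicative.ofAdd (1 : ZMod 2))
      (FreeGroup.of true) = 1 := by rw [FreeGroup.lift_apply_of]; rfl
  have fb : FreeGroup.lift (fun t => if t then 1 else Multiplicative.ofAdd (1 : ZMod 2))
      (FreeGroup.of false) = Multiplicative.ofAdd (1 : ZMod 2) := by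
    rw [FreeGroup.lift_apply_of]; rfl
  simp only [kRels, Set.mem_insert_iff, Set.mem_singleton_iff] at hr
  rcases hr with rfl | rfl | rfl
  · rw [map_pow, fa, one_pow]
  · rw [map_mul, map_inv, map_pow, map_pow, fa, fb, one_pow, inv_one, mul_one,
      ← ofAdd_nsmul, nsmul_eq_mul, mul_one,
      show ((2 ^ (n-2) : ℕ) : ZMod 2) = 0 from by
        rw [ZMod.natCast_eq_zero_iff]
        exact dvd_pow_self 2 (by omega)]
    rfl
  · rw [map_mul, map_mul, map_mul, map_inv, map_inv, map_zpow, fa, fb, one_zpow, inv_one,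
      mul_one, mul_one, mul_inv_cancel]

/-- the quotient map onto `C₂` that kills `K⁺`. -/
def pitwo (hn : 5 ≤ n) : K n →* Multiplicative (ZMod 2) :=
  PresentedGroup.toGroup (pitwo_check n hn)

lemma pitwo_b (hn : 5 ≤ n) : pitwo n hn (kb n) = Multiplicative.ofAdd (1 : ZMod 2) := by
  rw [kb, pitwo, PresentedGroup.toGroup.of]
  rfl

lemma pitwo_a (hn : 5 ≤ n) : pitwo n hn (ka n) = 1 := by
  rw [ka, pitwo, PresentedGroup.toGroup.of]
  rfl

lemma Kp_le_ker (hn : 5 ≤ n) : Kp n ≤ (pitwo n hn).ker := by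
  rw [Kp, Subgroup.closure_le]
  intro g hg
  rcases hg with rfl | hg
  · show pitwo n hn (((kb n)⁻¹) ^ 2) = 1
    rw [map_pow, map_inv, pitwo_b n hn, ← ofAdd_neg, ← ofAdd_nsmul, nsmul_eq_mul]
    rw [show ((2:ℕ) : ZMod 2) * (-1) = 0 from by decide]
    rfl
  · rw [Set.mem_singleton_iff] at hg
    subst hg
    exact pitwo_a n hn

lemma notboth (hn : 5 ≤ n) (g : K n) (hg : g ∈ Kp n) (hgb : g * kb n ∈ Kp n) : False := by
  have h1 : pitwo n hn g = 1 := Kp_le_ker n hn hg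
  have h2 : pitwo n hn (g * kb n) = 1 := Kp_le_ker n hn hgb
  rw [map_mul, h1, one_mul, pitwo_b n hn] at h2
  exact absurd h2 (by decide)

lemma conj_b_mem (hn : 5 ≤ n) (h : K n) (hh : h ∈ Kp n) :
    (kb n)⁻¹ * h * kb n ∈ Kp n := by
  refine Subgroup.closure_induction ?_ ?_ ?_ ?_ hh
  · intro g hg
    rcases hg with rfl | hg
    · rw [show (kb n)⁻¹ * ((kb n)⁻¹) ^ 2 * kb n = ((kb n)⁻¹) ^ 2 from by group]
      exact x_mem n
    · rw [Set.mem_singleton_iff] at hg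
      subst hg
      rw [rconj]
      exact zpow_mem (a_mem n) _
  · rw [show (kb n)⁻¹ * 1 * kb n = 1 from by group]
    exact one_mem _
  · intro g g' _ _ hg hg'
    rw [show (kb n)⁻¹ * (g * g') * kb n =
      ((kb n)⁻¹ * g * kb n) * ((kb n)⁻¹ * g' * kb n) from by group]
    exact mul_mem hg hg'
  · intro g _ hg
    rw [show (kb n)⁻¹ * g⁻¹ * kb n = ((kb n)⁻¹ * g * kb n)⁻¹ from by group]
    exact inv_mem hg

lemma covering (hn : 5 ≤ n) (g : K n) : g ∈ Kp n ∨ g * kb n ∈ Kp n := by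
  induction g using PresentedGroup.induction_on with
  | _ w =>
    induction w using FreeGroup.induction_on with
    | C1 =>
      left
      rw [map_one]
      exact one_mem _
    | of x =>
      cases x
      · right
        show kb n * kb n ∈ Kp n
        rw [show kb n * kb n = (((kb n)⁻¹) ^ 2)⁻¹ from by rw [← pow_two, inv_pow, inv_inv]]
        exact inv_mem (x_mem n)
      · left
        exact a_mem n
    | inv_of x _ =>
      cases x
      · right
        show (kb n)⁻¹ * kb n ∈ Kp n
        rw [inv_mul_cancel]
        exact one_mem _
      · left
        show (ka n)⁻¹ ∈ Kp n
        exact inv_mem (a_mem n)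
    | mul v w hv hw =>
      rw [map_mul]
      rcases hv with hv | hv <;> rcases hw with hw | hw
      · left
        exact mul_mem hv hw
      · right
        rw [mul_assoc]
        exact mul_mem hv hw
      · right
        rw [show PresentedGroup.mk (kRels n) v * PresentedGroup.mk (kRels n) w * kb n =
          (PresentedGroup.mk (kRels n) v * kb n) *
            ((kb n)⁻¹ * PresentedGroup.mk (kRels n) w * kb n) from by group]
        exact mul_mem hv (conj_b_mem n hn _ hw)
      · left
        rw [show PresentedGroup.mk (kRels n) v * PresentedGroup.mk (kRels n) w =
          (PresentedGroup.mk (kRels n) v * kb n) *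
            ((kb n)⁻¹ * (PresentedGroup.mk (kRels n) w * kb n) * kb n) * ((kb n)⁻¹) ^ 2 from by
          group]
        exact mul_mem (mul_mem hv (conj_b_mem n hn _ hw)) (x_mem n)

lemma Kp_index (hn : 5 ≤ n) : (Kp n).index = 2 := by
  rw [Subgroup.index_eq_two_iff]
  refine ⟨kb n, fun g => ?_⟩
  rcases covering n hn g with hg | hg
  · right
    exact ⟨hg, fun h => notboth n hn g hg h⟩
  · left
    exact ⟨hg, fun h => notboth n hn g h hg⟩

end St18

/-- For `n ≥ 5`, the subgroup `K_n⁺ = ⟨b⁻², a⟩` of `K_n` is an abelian subgroup of index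
two isomorphic to `C_(2^(n-2)) × C₄`, and it contains exactly three involutions. -/
theorem stmt18 (n : ℕ) (hn : 5 ≤ n) :
    (Subgroup.closure {((kb n)⁻¹) ^ 2, ka n} : Subgroup (K n)).index = 2 ∧
    (∀ g ∈ (Subgroup.closure {((kb n)⁻¹) ^ 2, ka n} : Subgroup (K n)),
      ∀ h ∈ (Subgroup.closure {((kb n)⁻¹) ^ 2, ka n} : Subgroup (K n)), g * h = h * g) ∧
    Nonempty ((Subgroup.closure {((kb n)⁻¹) ^ 2, ka n} : Subgroup (K n)) ≃*
      Multiplicative (ZMod (2 ^ (n - 2))) × Multiplicative (ZMod 4)) ∧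
    Nat.card {g : K n | orderOf g = 2 ∧
      g ∈ Subgroup.closure {((kb n)⁻¹) ^ 2, ka n}} = 3 := by
  refine ⟨St18.Kp_index n hn, ?_, ?_, St18.invo_card n hn⟩
  · intro g hg h hh
    obtain ⟨p, rfl⟩ := St18.theta_surj_mem n hn hg
    obtain ⟨q, rfl⟩ := St18.theta_surj_mem n hn hh
    rw [← map_mul, ← map_mul, mul_comm]
  · exact ⟨(MulEquiv.ofBijective _ (St18.theta'_bij n hn)).symm⟩
end
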